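/- arXiv:1501.02877 — 16 statements merged into one kernel-verified Lean document; each statement's English description precedes it below -/
import Mathlib

section
/- Every separable regular topological space has weight at most the cardinality of the continuum. -/
open Cardinal TopologicalSpace

/-- The weight of a topological space: the minimal cardinality of a base. -/
noncomputable def tweight (X : Type u) [TopologicalSpace X] : Cardinal.{u} :=
  sInf {c : Cardinal.{u} | ∃ B : Set (Set X), IsTopologicalBasis B ∧ #B = c}

/-- Every separable regular (T₃) space has weight at most the continuum. -/
theorem weight_le_continuum_of_separable (X : Type u) [TopologicalSpace X]
    [T3Space X] [SeparableSpace X] : tweight X ≤ Cardinal.continuum := by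
  obtain ⟨D, hDc, hDd⟩ := ‹SeparableSpace X›.exists_countable_dense
  set B : Set (Set X) := (fun S => interior (closure S)) '' 𝒫 D with hB
  have hbasis : IsTopologicalBasis B := by
    refine isTopologicalBasis_of_isOpen_of_nhds ?_ ?_
    · rintro u ⟨S, -, rfl⟩; exact isOpen_interior
    · intro x u hx hu
      obtain ⟨V, hVn, hVc, hVu⟩ := exists_mem_nhds_isClosed_subset (hu.mem_nhds hx)
      set U := interior V
      have hxU : x ∈ U := mem_interior_iff_mem_nhds.2 hVn
      refine ⟨interior (closure (U ∩ D)), ⟨U ∩ D, Set.inter_subset_right, rfl⟩, ?_, ?_⟩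
      · exact interior_maximal (hDd.open_subset_closure_inter isOpen_interior) isOpen_interior hxU
      · calc interior (closure (U ∩ D)) ⊆ closure (U ∩ D) := interior_subset
          _ ⊆ closure V := closure_mono (Set.inter_subset_left.trans interior_subset)
          _ = V := hVc.closure_eq
          _ ⊆ u := hVu
  have hmem : #B ∈ {c : Cardinal.{u} | ∃ B : Set (Set X), IsTopologicalBasis B ∧ #B = c} :=
    ⟨B, hbasis, rfl⟩
  refine (csInf_le' hmem).trans ?_
  calc #B ≤ #(𝒫 D) := mk_image_le
    _ = #(Set D) := Cardinal.mk_congr (Equiv.Set.powerset D)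
    _ = 2 ^ #D := Cardinal.mk_set
    _ ≤ 2 ^ (ℵ₀ : Cardinal.{u}) := by
        exact Cardinal.power_le_power_left (by norm_num) (Cardinal.mk_le_aleph0_iff.mpr hDc)
    _ = Cardinal.continuum := Cardinal.two_power_aleph0
end

section
/- Every regular topological space X satisfies w(X) ≤ 2^{d(X)}, where d(X) is the density character of X. -/
open Cardinal TopologicalSpace

/-- The density character of a topological space: the minimal cardinality of a dense subset. -/
noncomputable def tdensity (X : Type u) [TopologicalSpace X] : Cardinal.{u} :=
  sInf {c : Cardinal.{u} | ∃ s : Set X, Dense s ∧ #s = c}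

/-- Every regular (T₃) space `X` satisfies `w(X) ≤ 2 ^ d(X)`. -/
theorem weight_le_two_pow_density (X : Type u) [TopologicalSpace X] [T3Space X] :
    tweight X ≤ 2 ^ tdensity X := by
  -- obtain a dense set realizing the density
  have hne : {c : Cardinal.{u} | ∃ s : Set X, Dense s ∧ #s = c}.Nonempty :=
    ⟨#(Set.univ : Set X), Set.univ, dense_univ, rfl⟩
  obtain ⟨s, hs, hcard⟩ : ∃ s : Set X, Dense s ∧ #s = tdensity X := csInf_mem hne
  -- the candidate basis
  set B : Set (Set X) := (fun A : Set X => interior (closure A)) '' 𝒫 s with hB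
  have hbasis : IsTopologicalBasis B := by
    refine isTopologicalBasis_of_isOpen_of_nhds ?_ ?_
    · rintro u ⟨A, -, rfl⟩; exact isOpen_interior
    · intro x u hx hu
      obtain ⟨t, ht, htc, hts⟩ := exists_mem_nhds_isClosed_subset (hu.mem_nhds hx)
      refine ⟨interior (closure (interior t ∩ s)), ⟨interior t ∩ s, Set.inter_subset_right, rfl⟩,
        ?_, ?_⟩
      · have h1 : interior t ⊆ closure (interior t ∩ s) :=
          hs.open_subset_closure_inter isOpen_interior
        have h2 : interior t ⊆ interior (closure (interior t ∩ s)) :=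
          interior_maximal h1 isOpen_interior
        exact h2 (mem_interior_iff_mem_nhds.mpr ht)
      · calc interior (closure (interior t ∩ s)) ⊆ closure (interior t ∩ s) :=
              interior_subset
          _ ⊆ closure t := closure_mono (Set.inter_subset_left.trans interior_subset)
          _ = t := htc.closure_eq
          _ ⊆ u := hts
  have h1 : tweight X ≤ #B := csInf_le' ⟨B, hbasis, rfl⟩
  refine h1.trans ?_
  calc #B ≤ #(𝒫 s : Set (Set X)) := Cardinal.mk_image_le
    _ = 2 ^ #s := Cardinal.mk_powerset s
    _ = 2 ^ tdensity X := by rw [hcard]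
end

section
/- If {X_i : i ∈ I} is a family of topological spaces each of density character at most κ (κ an infinite cardinal) and |I| ≤ 2^κ, then the product space ∏_{i∈I} X_i has density character at most κ. -/
open Cardinal TopologicalSpace

lemma tdensity_le_of_dense {X : Type u} [TopologicalSpace X] {s : Set X} (hs : Dense s) :
    tdensity X ≤ #s :=
  csInf_le' ⟨s, hs, rfl⟩

lemma exists_dense_card_eq (X : Type u) [TopologicalSpace X] :
    ∃ s : Set X, Dense s ∧ #s = tdensity X := by
  have : tdensity X ∈ {c : Cardinal.{u} | ∃ s : Set X, Dense s ∧ #s = c} :=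
    csInf_mem ⟨#(Set.univ : Set X), Set.univ, dense_univ, rfl⟩
  obtain ⟨s, hs, hc⟩ := this
  exact ⟨s, hs, hc⟩

/-- Hewitt–Marczewski–Pondiczery theorem: if `d(X i) ≤ κ` for each `i ∈ I` and
`|I| ≤ 2 ^ κ` where `κ` is an infinite cardinal, then `d(∏ i, X i) ≤ κ`. -/
theorem density_pi_le (κ : Cardinal.{u}) (hκ : ℵ₀ ≤ κ) (I : Type u) (X : I → Type u)
    [∀ i, TopologicalSpace (X i)] (hI : #I ≤ 2 ^ κ) (hd : ∀ i, tdensity (X i) ≤ κ) :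
    tdensity (∀ i, X i) ≤ κ := by
  classical
  by_cases hne : Nonempty (∀ i, X i)
  swap
  · calc tdensity (∀ i, X i) ≤ #(Set.univ : Set (∀ i, X i)) := tdensity_le_of_dense dense_univ
      _ = #(∀ i, X i) := Cardinal.mk_univ
      _ = 0 := Cardinal.mk_eq_zero_iff.2 ⟨fun x => hne ⟨x⟩⟩
      _ ≤ κ := zero_le
  have hXne : ∀ i, Nonempty (X i) := fun i => ⟨hne.some i⟩
  -- the index type of size κ
  set K : Type u := κ.out with hK
  have hmkK : #K = κ := Cardinal.mk_out κ
  have hinfK : Infinite K := Cardinal.infinite_iff.2 (hmkK ▸ hκ)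
  -- surjections onto dense sets
  have hg : ∀ i, ∃ g : K → X i, Dense (Set.range g) := by
    intro i
    obtain ⟨s, hs, hcard⟩ := exists_dense_card_eq (X i)
    have hsle : #s ≤ #K := by rw [hmkK, hcard]; exact hd i
    have hsne : Nonempty s := (hs.nonempty).to_subtype
    obtain ⟨f⟩ := Cardinal.le_def _ _ |>.1 hsle
    refine ⟨Subtype.val ∘ Function.invFun f, ?_⟩
    have hsurj : Function.Surjective (Function.invFun f) :=
      Function.invFun_surjective f.injective
    rw [Set.range_comp, hsurj.range_eq, Set.image_univ, Subtype.range_val]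
    exact hs
  choose g hgd using hg
  -- embedding of I into Set K
  have hIle : #I ≤ #(Set K) := by rw [Cardinal.mk_set, hmkK]; exact hI
  obtain ⟨e⟩ := Cardinal.le_def _ _ |>.1 hIle
  -- the parametrized family of points
  let Φ : (Σ F : Finset K, ((F → Prop) → K)) → ∀ i, X i :=
    fun d i => g i (d.2 (fun k => (k : K) ∈ e i))
  have hdense : Dense (Set.range Φ) := by
    rw [dense_iff_inter_open]
    rintro U hU ⟨x, hx⟩
    obtain ⟨t, u, h1, h2⟩ := isOpen_pi_iff.1 hU x hx
    -- choose approximating parameters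
    have hα : ∀ i, ∃ a : K, i ∈ t → g i a ∈ u i := by
      intro i
      by_cases hi : i ∈ t
      · obtain ⟨y, hy⟩ := (hgd i).exists_mem_open (h1 i hi).1 ⟨x i, (h1 i hi).2⟩
        obtain ⟨a, rfl⟩ := hy.1
        exact ⟨a, fun _ => hy.2⟩
      · exact ⟨Classical.arbitrary K, fun h => absurd h hi⟩
    choose α hα using hα
    -- a finset separating the (distinct) sets `e i`, `i ∈ t`
    have hsep : ∀ i j : I, ∃ k : K, i ≠ j → ((k ∈ e i) ≠ (k ∈ e j)) := by
      intro i j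
      by_cases hij : i = j
      · exact ⟨Classical.arbitrary K, fun h => absurd hij h⟩
      · have : e i ≠ e j := fun h => hij (e.injective h)
        have : ∃ k, ¬ ((k ∈ e i) ↔ (k ∈ e j)) := by
          by_contra h
          push_neg at h
          exact this (Set.ext fun k => h k)
        obtain ⟨k, hk⟩ := this
        exact ⟨k, fun _ => fun h => hk (iff_of_eq h)⟩
    choose c hc using hsep
    let F : Finset K := t.biUnion fun i => t.image (c i)
    -- patterns of the `e i` on `F`
    let pat : I → (F → Prop) := fun i k => (k : K) ∈ e i
    have hpat : ∀ i ∈ t, ∀ j ∈ t, pat i = pat j → i = j := by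
      intro i hi j hj hij
      by_contra hne'
      have hkF : c i j ∈ F := Finset.mem_biUnion.2 ⟨i, hi, Finset.mem_image.2 ⟨j, hj, rfl⟩⟩
      have := congrFun hij ⟨c i j, hkF⟩
      exact hc i j hne' this
    -- the value assignment
    let φ : (F → Prop) → K := fun p =>
      if h : ∃ i ∈ t, pat i = p then α h.choose else Classical.arbitrary K
    refine ⟨Φ ⟨F, φ⟩, h2 ?_, Set.mem_range_self _⟩
    intro i hi
    have hex : ∃ j ∈ t, pat j = pat i := ⟨i, hi, rfl⟩
    have hΦ : Φ ⟨F, φ⟩ i = g i (α i) := by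
      show g i (φ (pat i)) = g i (α i)
      have : φ (pat i) = α hex.choose := dif_pos hex
      rw [this]
      have hj := hex.choose_spec
      rw [hpat _ hj.1 _ hi hj.2]
    rw [hΦ]
    exact hα i hi
  -- cardinality estimate
  have hcard : #(Set.range Φ) ≤ κ := by
    refine le_trans Cardinal.mk_range_le ?_
    rw [Cardinal.mk_sigma]
    calc (Cardinal.sum fun F : Finset K => #((F → Prop) → K))
        ≤ Cardinal.sum fun _ : Finset K => κ := by
          refine Cardinal.sum_le_sum _ _ fun F => ?_
          rw [← Cardinal.power_def, hmkK]
          exact Cardinal.pow_le hκ (Cardinal.lt_aleph0_of_finite _)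
      _ = #(Finset K) * κ := Cardinal.sum_const' _ _
      _ = κ * κ := by rw [Cardinal.mk_finset_of_infinite, hmkK]
      _ = κ := Cardinal.mul_eq_self hκ
  exact le_trans (tdensity_le_of_dense hdense) hcard
end

section
/- The product of at most continuum many separable topological spaces is separable. -/
open Cardinal TopologicalSpace

private lemma find?_eq_of_append {α : Type*} (p : α → Bool) (A B : List α) (e : α)
    (hA : ∀ a ∈ A, p a = false) (he : p e = true) :
    List.find? p (A ++ e :: B) = some e := by
  induction A with
  | nil => simp [List.find?_cons, he]
  | cons a A ih =>
    simp [List.find?_cons, hA a (by simp), ih (fun x hx => hA x (by simp [hx]))]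

/-- The product of at most continuum many separable topological spaces is separable. -/
theorem separableSpace_pi_of_card_le_continuum (I : Type u) (X : I → Type u)
    [∀ i, TopologicalSpace (X i)] (hI : #I ≤ Cardinal.continuum)
    [∀ i, SeparableSpace (X i)] : SeparableSpace (∀ i, X i) := by
  classical
  by_cases hne : ∀ i, Nonempty (X i)
  swap
  · push_neg at hne
    obtain ⟨i, hi⟩ := hne
    have : IsEmpty (∀ i, X i) := ⟨fun x => hi.false (x i)⟩
    infer_instance
  haveI := hne
  have hcard : #I ≤ #(ULift.{u} ℝ) := by
    rwa [Cardinal.mk_uLift, Cardinal.mk_real, Cardinal.lift_continuum]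
  obtain ⟨f⟩ := (Cardinal.le_def _ _).mp hcard
  set fr : I → ℝ := fun i => (f i).down with hfr
  have hfr_inj : Function.Injective fr := ULift.down_injective.comp f.injective
  set u : ∀ i, ℕ → X i := fun i => denseSeq (X i) with hu
  set pr : ℝ → (ℚ × ℚ) × ℕ → Bool :=
    fun r e => decide ((e.1.1 : ℝ) < r ∧ r < (e.1.2 : ℝ)) with hpr
  set g : List ((ℚ × ℚ) × ℕ) → ∀ i, X i := fun L i =>
    u i (((L.find? (pr (fr i))).map Prod.snd).getD 0) with hg
  apply SeparableSpace.of_denseRange g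
  intro x
  rw [mem_closure_iff_nhds]
  intro U hU
  rw [nhds_pi, Filter.mem_pi] at hU
  obtain ⟨F, hFfin, V, hV, hVU⟩ := hU
  -- choose coordinates of dense sequences landing in the V i
  have hm : ∀ i, ∃ k, u i k ∈ V i := by
    intro i
    obtain ⟨k, hk⟩ := (denseRange_denseSeq (X i)).exists_mem_open isOpen_interior
      ⟨x i, mem_interior_iff_mem_nhds.mpr (hV i)⟩
    exact ⟨k, interior_subset hk⟩
  choose m hmV using hm
  set F' : Finset I := hFfin.toFinset with hF'
  -- choose rational intervals isolating each fr i from the other fr j, j ∈ F'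
  have hq : ∀ i : I, ∃ q₁ q₂ : ℚ, i ∈ F' →
      (((q₁ : ℝ) < fr i ∧ fr i < q₂) ∧
        ∀ j ∈ F', j ≠ i → ¬((q₁ : ℝ) < fr j ∧ fr j < q₂)) := by
    intro i
    by_cases hi : i ∈ F'
    swap
    · exact ⟨0, 0, fun h => absurd h hi⟩
    set S : Finset ℝ := (F'.erase i).image fr with hS
    have hiS : fr i ∉ S := by
      intro hmem
      rw [hS, Finset.mem_image] at hmem
      obtain ⟨j, hj, hji⟩ := hmem
      exact (Finset.ne_of_mem_erase hj) (hfr_inj hji)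
    have hSop : IsOpen ((↑S : Set ℝ)ᶜ) := (S.finite_toSet.isClosed).isOpen_compl
    obtain ⟨ε, hε, hball⟩ := Metric.isOpen_iff.mp hSop (fr i) hiS
    obtain ⟨q₁, hq₁, hq₁'⟩ := exists_rat_btwn (show fr i - ε < fr i by linarith)
    obtain ⟨q₂, hq₂, hq₂'⟩ := exists_rat_btwn (show fr i < fr i + ε by linarith)
    refine ⟨q₁, q₂, fun _ => ⟨⟨hq₁', hq₂⟩, ?_⟩⟩
    intro j hj hji hcon
    have hjS : fr j ∈ (↑S : Set ℝ) := by
      rw [hS]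
      exact_mod_cast Finset.mem_image_of_mem fr (Finset.mem_erase.mpr ⟨hji, hj⟩)
    have : fr j ∈ Metric.ball (fr i) ε := by
      rw [Metric.mem_ball, Real.dist_eq, abs_sub_lt_iff]
      constructor <;> linarith [hcon.1, hcon.2]
    exact hball this hjS
  choose q₁ q₂ hq using hq
  set e : I → (ℚ × ℚ) × ℕ := fun i => ((q₁ i, q₂ i), m i) with he
  set L : List ((ℚ × ℚ) × ℕ) := F'.toList.map e with hL
  refine ⟨g L, hVU ?_, Set.mem_range_self L⟩
  intro i hiF
  have hi' : i ∈ F' := hFfin.mem_toFinset.mpr hiF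
  obtain ⟨A, B, hAB⟩ := List.append_of_mem (Finset.mem_toList.mpr hi')
  have hnd : (A ++ i :: B).Nodup := by rw [← hAB]; exact F'.nodup_toList
  have hiA : i ∉ A := fun hin =>
    (List.disjoint_of_nodup_append hnd) hin List.mem_cons_self
  have hfind : L.find? (pr (fr i)) = some (e i) := by
    rw [hL, hAB, List.map_append, List.map_cons]
    apply find?_eq_of_append
    · intro a ha
      rw [List.mem_map] at ha
      obtain ⟨j, hjA, rfl⟩ := ha
      have hjF : j ∈ F' := Finset.mem_toList.mp (by rw [hAB]; exact List.mem_append_left _ hjA)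
      have hji : j ≠ i := fun h => hiA (h ▸ hjA)
      have := (hq j hjF).2 i hi' (fun h => hji h.symm)
      simpa [hpr, he] using this
    · have := (hq i hi').1
      simpa [hpr, he] using this
  have : g L i = u i (m i) := by
    rw [hg]
    simp only [hfind, Option.map_some, Option.getD_some, he]
  rw [this]
  exact hmV i
end

section
/- If L is a Lindelöf subspace of a separable Hausdorff space X, then the network weight of L is at most the cardinality of the continuum. -/
open Cardinal TopologicalSpace

/-- A family `N` of subsets of `X` is a network if every neighbourhood of every point
contains a member of `N` containing the point. -/
def IsNetwork {X : Type u} [TopologicalSpace X] (N : Set (Set X)) : Prop :=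
  ∀ (y : X) (U : Set X), IsOpen U → y ∈ U → ∃ F ∈ N, y ∈ F ∧ F ⊆ U

/-- The network weight of a space: the minimal cardinality of a network. -/
noncomputable def networkWeight (X : Type u) [TopologicalSpace X] : Cardinal.{u} :=
  sInf {c : Cardinal.{u} | ∃ N : Set (Set X), IsNetwork N ∧ #N = c}

/-- A Lindelöf subspace of a separable Hausdorff space has network weight at most
the continuum. -/
theorem networkWeight_le_continuum_of_lindelof (X : Type u) [TopologicalSpace X]
    [T2Space X] [SeparableSpace X] (L : Set X) (hL : IsLindelof L) :
    networkWeight L ≤ Cardinal.continuum := by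
  obtain ⟨D, hDc, hDd⟩ := TopologicalSpace.exists_countable_dense X
  haveI : Countable ↥D := hDc.to_subtype
  set g : (ℕ → Set ↥D) → Set ↥L := fun S =>
    (fun x : ↥L => (x : X)) ⁻¹' (⋂ n, closure ((fun d : ↥D => (d : X)) '' S n)) with hg
  set N : Set (Set ↥L) := Set.range g with hN
  have hNet : IsNetwork N := by
    intro y U hU hyU
    rw [isOpen_induced_iff] at hU
    obtain ⟨V, hV, rfl⟩ := hU
    have hyV : (y : X) ∈ V := hyU
    set K : Set X := L ∩ Vᶜ with hK
    have hKlin : IsLindelof K := hL.inter_right (isClosed_compl_iff.mpr hV)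
    by_cases hKe : K.Nonempty
    · have hsep : ∀ z : X, ∃ A B : Set X, IsOpen A ∧ IsOpen B ∧ (y : X) ∈ A ∧
          (z ∈ K → z ∈ B) ∧ Disjoint A B := by
        intro z
        by_cases hz : z ∈ K
        · have hne : (y : X) ≠ z := fun h => hz.2 (h ▸ hyV)
          obtain ⟨A, B, hA, hB, hyA, hzB, hAB⟩ := t2_separation hne
          exact ⟨A, B, hA, hB, hyA, fun _ => hzB, hAB⟩
        · exact ⟨Set.univ, ∅, isOpen_univ, isOpen_empty, trivial, fun h => absurd h hz,
            Set.disjoint_empty _⟩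
      choose A B hAo hBo hyA hzB hAB using hsep
      obtain ⟨t, htc, hts, htcov⟩ := hKlin.elim_nhds_subcover B
        (fun z hz => (hBo z).mem_nhds (hzB z hz))
      have htne : t.Nonempty := by
        obtain ⟨w, hw⟩ := hKe
        have := htcov hw
        simp only [Set.mem_iUnion] at this
        obtain ⟨i, hi, _⟩ := this
        exact ⟨i, hi⟩
      obtain ⟨f, hft⟩ := htc.exists_eq_range htne
      refine ⟨g (fun n => {d : ↥D | (d : X) ∈ A (f n)}), ⟨_, rfl⟩, ?_, ?_⟩
      · -- y ∈ g S
        simp only [hg, Set.mem_preimage, Set.mem_iInter]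
        intro n
        have him : (fun d : ↥D => (d : X)) '' {d : ↥D | (d : X) ∈ A (f n)}
            = A (f n) ∩ D := by
          ext x
          constructor
          · rintro ⟨d, hd, rfl⟩; exact ⟨hd, d.2⟩
          · rintro ⟨hx, hxD⟩; exact ⟨⟨x, hxD⟩, hx, rfl⟩
        rw [him]
        exact hDd.open_subset_closure_inter (hAo (f n)) (hyA (f n))
      · -- g S ⊆ U
        intro w hw
        simp only [hg, Set.mem_preimage, Set.mem_iInter] at hw
        by_contra hwV
        have hwK : (w : X) ∈ K := ⟨w.2, hwV⟩
        have := htcov hwK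
        simp only [Set.mem_iUnion] at this
        obtain ⟨z, hz, hwB⟩ := this
        rw [hft] at hz
        obtain ⟨n, rfl⟩ := hz
        have h1 := hw n
        have him : (fun d : ↥D => (d : X)) '' {d : ↥D | (d : X) ∈ A (f n)}
            ⊆ A (f n) := by rintro x ⟨d, hd, rfl⟩; exact hd
        have h2 : (w : X) ∈ closure (A (f n)) :=
          closure_mono him h1
        have h3 : closure (A (f n)) ∩ B (f n) = ∅ := by
          have : Disjoint (closure (A (f n))) (B (f n)) :=
            (hAB (f n)).closure_left (hBo (f n))
          exact Set.disjoint_iff_inter_eq_empty.mp this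
        have : (w : X) ∈ closure (A (f n)) ∩ B (f n) := ⟨h2, hwB⟩
        rw [h3] at this
        exact this
    · -- K empty
      refine ⟨g (fun _ => Set.univ), ⟨_, rfl⟩, ?_, ?_⟩
      · simp only [hg, Set.mem_preimage, Set.mem_iInter]
        intro n
        have : closure ((fun d : ↥D => (d : X)) '' Set.univ) = Set.univ := by
          rw [Set.image_univ]
          have : Set.range (fun d : ↥D => (d : X)) = D := Subtype.range_coe
          rw [this]
          exact hDd.closure_eq
        rw [this]; trivial
      · intro w _
        by_contra hwV
        exact hKe ⟨w, w.2, hwV⟩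
  have hcard : #N ≤ Cardinal.continuum := by
    refine (mk_range_le).trans ?_
    have e : (ℕ → Set ↥D) ≃ Set (ℕ × ↥D) :=
      (Equiv.curry ℕ ↥D Prop).symm
    rw [Cardinal.mk_congr e, Cardinal.mk_set]
    calc (2 : Cardinal.{u}) ^ #(ℕ × ↥D) ≤ 2 ^ (ℵ₀ : Cardinal.{u}) := by
          apply Cardinal.power_le_power_left
          · exact two_ne_zero
          · exact Cardinal.mk_le_aleph0
      _ = Cardinal.continuum := Cardinal.two_power_aleph0
  calc networkWeight ↥L ≤ #N := csInf_le' ⟨N, hNet, rfl⟩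
    _ ≤ Cardinal.continuum := hcard
end

section
/- Every compact subspace K of a separable Hausdorff space satisfies w(K) ≤ 𝔠, where w denotes topological weight and 𝔠 the cardinality of the continuum. -/
open Cardinal TopologicalSpace

/-- Every compact subspace of a separable Hausdorff space has weight at most the continuum. -/
theorem weight_le_continuum_of_compact_subspace (X : Type u) [TopologicalSpace X]
    [T2Space X] [SeparableSpace X] (K : Set X) (hK : IsCompact K) :
    tweight K ≤ Cardinal.continuum := by
  obtain ⟨D, hDcount, hDdense⟩ := ‹SeparableSpace X›.exists_countable_dense
  set f : Set X → Set K := fun S => Subtype.val ⁻¹' (closure S)ᶜ with hf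
  set B : Set (Set K) := f '' 𝒫 D with hB
  have hbasis : IsTopologicalBasis B := by
    apply isTopologicalBasis_of_isOpen_of_nhds
    · rintro _ ⟨S, -, rfl⟩
      exact isClosed_closure.isOpen_compl.preimage continuous_subtype_val
    · rintro x u hxu hu
      obtain ⟨U, hU, rfl⟩ := isOpen_induced_iff.mp hu
      have hF : IsCompact (K \ U) := by
        rw [Set.diff_eq]
        exact hK.inter_right hU.isClosed_compl
      have hxF : x.val ∉ K \ U := fun h => h.2 hxu
      obtain ⟨V, W, hVo, hWo, hxV, hFW, hVW⟩ :=
        SeparatedNhds.of_isCompact_isCompact isCompact_singleton hF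
          (Set.disjoint_singleton_left.mpr hxF)
      refine ⟨f (D ∩ W), ⟨D ∩ W, Set.inter_subset_left, rfl⟩, ?_, ?_⟩
      · -- x ∈ f (D ∩ W), i.e. x.val ∉ closure (D ∩ W)
        intro hx
        obtain ⟨y, hyV, -, hyW⟩ :=
          mem_closure_iff.mp hx V hVo (hxV rfl)
        exact hVW.ne_of_mem hyV hyW rfl
      · -- f (D ∩ W) ⊆ val ⁻¹' U
        intro y hy
        by_contra hyU
        have hyW : y.val ∈ W := hFW ⟨y.2, hyU⟩
        have h1 : W ⊆ closure (D ∩ W) := by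
          have := hDdense.open_subset_closure_inter hWo
          rwa [Set.inter_comm] at this
        exact hy (h1 hyW)
  have hcard : #B ≤ Cardinal.continuum := by
    calc #B ≤ #(𝒫 D) := mk_image_le
      _ = 2 ^ #D := mk_powerset D
      _ ≤ 2 ^ ℵ₀ := by
          apply power_le_power_left two_ne_zero
          exact mk_le_aleph0_iff.mpr hDcount.to_subtype
      _ = Cardinal.continuum := two_power_aleph0
  exact le_trans (csInf_le' ⟨B, hbasis, rfl⟩) hcard
end

section
/- If a compact Hausdorff topological group G is homeomorphic to a subspace of a separable Hausdorff space, then G is separable. -/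
open TopologicalSpace Set Function

universe u v

noncomputable section SeparableCompactGroup

/-- Our fixed projective separable compactum: `βℕ`, lifted to universe `u`. -/
abbrev Zu : Type u := ULift.{u} (Ultrafilter ℕ)

instance : CompactSpace (Zu.{u}) := (Homeomorph.ulift.symm : Ultrafilter ℕ ≃ₜ Zu).compactSpace
instance : T2Space (Zu.{u}) := Homeomorph.ulift.symm.t2Space

lemma denseRange_upPure : DenseRange (fun n : ℕ => (ULift.up (pure n) : Zu.{u})) := by
  have h1 : DenseRange (pure : ℕ → Ultrafilter ℕ) := denseRange_pure
  have h2 : DenseRange (ULift.up : Ultrafilter ℕ → Zu.{u}) :=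
    (Homeomorph.ulift.symm : Ultrafilter ℕ ≃ₜ Zu).surjective.denseRange
  exact h2.comp h1 (Homeomorph.ulift.symm).continuous

instance : SeparableSpace (Zu.{u}) :=
  SeparableSpace.of_denseRange _ denseRange_upPure

/-- Gleason-style projectivity of `Zu`, by hand via `Ultrafilter.extend`. -/
lemma Zu.projective {Y W : Type u} [TopologicalSpace Y] [TopologicalSpace W]
    [CompactSpace Y] [T2Space Y] [CompactSpace W] [T2Space W]
    {f : Zu.{u} → W} {g : Y → W} (hf : Continuous f) (hg : Continuous g)
    (hsur : Surjective g) : ∃ h : Zu.{u} → Y, Continuous h ∧ ∀ z, g (h z) = f z := by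
  classical
  let s : W → Y := fun w => (hsur w).choose
  have hs : ∀ w, g (s w) = w := fun w => (hsur w).choose_spec
  let t : ℕ → Y := fun n => s (f (ULift.up (pure n)))
  have ht : Continuous t := continuous_of_discreteTopology
  let h : Zu.{u} → Y := fun z => Ultrafilter.extend t z.down
  have hh : Continuous h :=
    (continuous_ultrafilter_extend t).comp (Homeomorph.ulift).continuous
  refine ⟨h, hh, ?_⟩
  have : g ∘ h = f := by
    refine denseRange_upPure.equalizer (hg.comp hh) hf ?_
    ext n
    show g (Ultrafilter.extend t (pure n)) = f (ULift.up (pure n))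
    have := congrFun (ultrafilter_extend_extends t) n
    rw [Function.comp_apply] at this
    rw [this]
    exact hs _
  exact fun z => congrFun this z

/-- Closed graph lemma: a closed functional relation into a compact space
defines a continuous map. -/
lemma exists_continuous_of_closed_graph {Z Y : Type*} [TopologicalSpace Z]
    [TopologicalSpace Y] [CompactSpace Y] {R : Set (Z × Y)} (hR : IsClosed R)
    (hex : ∀ z, ∃ y, (z, y) ∈ R)
    (huni : ∀ z y₁ y₂, (z, y₁) ∈ R → (z, y₂) ∈ R → y₁ = y₂) :
    ∃ f : Z → Y, Continuous f ∧ ∀ z, (z, f z) ∈ R := by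
  classical
  choose f hf using hex
  refine ⟨f, ?_, hf⟩
  rw [continuous_iff_isClosed]
  intro C hC
  have key : f ⁻¹' C = Prod.fst '' (R ∩ (univ ×ˢ C)) := by
    ext z
    constructor
    · intro hz; exact ⟨(z, f z), ⟨hf z, ⟨trivial, hz⟩⟩, rfl⟩
    · rintro ⟨⟨z', y⟩, ⟨hR', ⟨-, hy⟩⟩, rfl⟩
      have : y = f z' := huni z' y (f z') hR' (hf z')
      simpa [← this] using hy
  rw [key]
  exact isClosedMap_fst_of_compactSpace _ (hR.inter (isClosed_univ.prod hC))

/-- If a compact T2 space `G` embeds into a separable T2 space,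
then `G` is a continuous image of a closed subspace of `Zu`. -/
lemma exists_closed_surjection_from_Zu {G : Type u} [TopologicalSpace G] [CompactSpace G]
    [T2Space G] {X : Type v} [TopologicalSpace X] [T2Space X] [SeparableSpace X]
    {φ : G → X} (hφc : Continuous φ) (hφi : Injective φ) [Nonempty G] :
    ∃ (F : Set (Zu.{u})) (lam : F → G), IsClosed F ∧ Continuous lam ∧ Surjective lam := by
  classical
  haveI : Nonempty X := ⟨φ (Classical.arbitrary G)⟩
  obtain ⟨D, hDc, hDd⟩ := exists_countable_dense X
  have hDne : D.Nonempty := hDd.nonempty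
  obtain ⟨e, hDe⟩ := hDc.exists_eq_range hDne
  have hed : Dense (range e) := by rw [← hDe]; exact hDd
  -- the convergence relation
  set Fh : Set (Zu.{u} × G) :=
    {p | Filter.map e (p.1.down : Filter ℕ) ≤ nhds (φ p.2)} with hFh
  have hFhclosed : IsClosed Fh := by
    rw [← isOpen_compl_iff]
    rw [isOpen_iff_forall_mem_open]
    rintro ⟨V₀, g₀⟩ hp
    have : ¬ (Filter.map e (V₀.down : Filter ℕ) ≤ nhds (φ g₀)) := hp
    -- extract an open U around φ g₀ whose preimage is not in the ultrafilter
    obtain ⟨t, ht, hnt⟩ := Filter.not_le.mp this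
    obtain ⟨U, hUt, hUo, hUm⟩ := mem_nhds_iff.mp ht
    have hpre : e ⁻¹' U ∉ V₀.down := by
      intro h
      exact hnt (Filter.mem_of_superset h (preimage_mono hUt))
    refine ⟨{p : Zu.{u} × G | (e ⁻¹' U)ᶜ ∈ p.1.down ∧ φ p.2 ∈ U}, ?_, ?_, ?_⟩
    · rintro ⟨V, g⟩ ⟨hV, hgU⟩ hle
      have hU' : e ⁻¹' U ∈ (V.down : Filter ℕ) := hle (hUo.mem_nhds hgU)
      exact absurd hU' (Ultrafilter.compl_mem_iff_notMem.mp hV)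
    · have h1 : IsOpen {p : Zu.{u} × G | (e ⁻¹' U)ᶜ ∈ p.1.down} := by
        have : IsOpen {u : Ultrafilter ℕ | (e ⁻¹' U)ᶜ ∈ u} := ultrafilter_isOpen_basic _
        exact this.preimage ((Homeomorph.ulift).continuous.comp continuous_fst)
      have h2 : IsOpen {p : Zu.{u} × G | φ p.2 ∈ U} :=
        (hUo.preimage hφc).preimage continuous_snd
      exact h1.inter h2
    · refine ⟨Ultrafilter.compl_mem_iff_notMem.mpr hpre, hUm⟩
  -- the set F and the map lam
  set Fs : Set (Zu.{u}) := Prod.fst '' Fh with hFs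
  have hFsc : IsClosed Fs := isClosedMap_fst_of_compactSpace _ hFhclosed
  have huni : ∀ (z : Zu.{u}) g₁ g₂, (z, g₁) ∈ Fh → (z, g₂) ∈ Fh → g₁ = g₂ := by
    intro z g₁ g₂ h₁ h₂
    haveI : (Filter.map e (z.down : Filter ℕ)).NeBot := Filter.NeBot.map z.down.neBot e
    exact hφi (tendsto_nhds_unique (h₁ : Filter.Tendsto e _ _) (h₂ : Filter.Tendsto e _ _))
  obtain ⟨lam, hlamc, hlam⟩ :=
    exists_continuous_of_closed_graph (Z := Fs) (Y := G)
      (R := {q : Fs × G | ((q.1 : Zu.{u}), q.2) ∈ Fh})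
      (hFhclosed.preimage (by exact (continuous_subtype_val.prodMap continuous_id)))
      (fun z => by
        obtain ⟨p, hp, hp1⟩ := z.2
        exact ⟨p.2, by show (↑z, p.2) ∈ Fh; rwa [← hp1]⟩)
      (fun z g₁ g₂ h₁ h₂ => huni z g₁ g₂ h₁ h₂)
  refine ⟨Fs, lam, hFsc, hlamc, ?_⟩
  -- surjectivity
  intro g
  have hproper : ∀ t ∈ nhds (φ g), (e ⁻¹' t).Nonempty := by
    intro t ht
    obtain ⟨U, hUt, hUo, hUm⟩ := mem_nhds_iff.mp ht
    obtain ⟨x, hxr, hxU⟩ := hed.exists_mem_open hUo ⟨_, hUm⟩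
    obtain ⟨n, rfl⟩ := hxr
    exact ⟨n, hUt hxU⟩
  have : (Filter.comap e (nhds (φ g))).NeBot := Filter.comap_neBot hproper
  set V : Ultrafilter ℕ := Ultrafilter.of (Filter.comap e (nhds (φ g))) with hV
  have hVle : Filter.map e (V : Filter ℕ) ≤ nhds (φ g) := by
    calc Filter.map e (V : Filter ℕ)
        ≤ Filter.map e (Filter.comap e (nhds (φ g))) :=
          Filter.map_mono (Ultrafilter.of_le _)
      _ ≤ nhds (φ g) := Filter.map_comap_le
  have hmem : ((ULift.up V : Zu.{u}), g) ∈ Fh := hVle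
  have hz : (ULift.up V : Zu.{u}) ∈ Fs := ⟨(ULift.up V, g), hmem, rfl⟩
  refine ⟨⟨ULift.up V, hz⟩, ?_⟩
  exact huni _ _ _ (hlam ⟨ULift.up V, hz⟩) hmem

section Wfn
variable {G : Type u} [Group G] [TopologicalSpace G] [IsTopologicalGroup G]
  [CompactSpace G] [T2Space G]

/-- Conjugation-invariant core: every neighborhood of `1` in a compact group contains a
neighborhood `V` of `1` such that `|f(avb) - f(ab)| ≤ ε` for all `a, b` and `v ∈ V`. -/
lemma exists_conj_small (f : G → ℝ) (hf : Continuous f) {ε : ℝ} (hε : 0 < ε) :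
    ∃ V : Set G, IsOpen V ∧ (1 : G) ∈ V ∧ (∀ v ∈ V, v⁻¹ ∈ V) ∧
      ∀ a b : G, ∀ v ∈ V, |f (a * v * b) - f (a * b)| ≤ ε := by
  classical
  set Ω : Set ((G × G) × G) := {q | |f (q.1.1 * q.2 * q.1.2) - f (q.1.1 * q.1.2)| < ε} with hΩ
  have hΩo : IsOpen Ω := by
    have hc : Continuous fun q : (G × G) × G =>
        |f (q.1.1 * q.2 * q.1.2) - f (q.1.1 * q.1.2)| := by fun_prop
    have : Ω = (fun q : (G × G) × G =>
        |f (q.1.1 * q.2 * q.1.2) - f (q.1.1 * q.1.2)|) ⁻¹' (Iio ε) := rfl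
    rw [this]; exact isOpen_Iio.preimage hc
  have hsub : (univ : Set (G × G)) ×ˢ ({1} : Set G) ⊆ Ω := by
    rintro ⟨⟨a, b⟩, v⟩ ⟨-, hv⟩
    simp only [mem_singleton_iff] at hv
    subst hv
    simp [hΩ, hε]
  obtain ⟨U, V, hUo, hVo, hU, hV, hUV⟩ :=
    generalized_tube_lemma isCompact_univ isCompact_singleton hΩo hsub
  refine ⟨V ∩ V⁻¹, (hVo.inter (hVo.preimage continuous_inv)), ⟨hV rfl, by simpa using hV rfl⟩,
    ?_, ?_⟩
  · rintro v ⟨h1, h2⟩; exact ⟨h2, by simpa using h1⟩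
  · intro a b v hv
    have : ((a, b), v) ∈ Ω := hUV ⟨hU trivial, hv.1⟩
    exact le_of_lt this

/-- The bi-invariant "norm" associated to a continuous function `f : G → [0,1]`. -/
def wfn (f : G → ℝ) (x : G) : ℝ :=
  sSup (range fun p : G × G => |f (p.1 * x * p.2) - f (p.1 * p.2)|)

lemma wfn_bdd {f : G → ℝ} (hf01 : ∀ x, f x ∈ Icc (0:ℝ) 1) (x : G) :
    BddAbove (range fun p : G × G => |f (p.1 * x * p.2) - f (p.1 * p.2)|) := by
  refine ⟨1, ?_⟩
  rintro r ⟨p, rfl⟩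
  have h1 := hf01 (p.1 * x * p.2); have h2 := hf01 (p.1 * p.2)
  rw [abs_le]
  constructor <;> simp only [neg_le, le_sub_iff_add_le, sub_le_iff_le_add] <;> nlinarith [h1.1, h1.2, h2.1, h2.2]

variable {f : G → ℝ}

lemma wfn_le (hf01 : ∀ x, f x ∈ Icc (0:ℝ) 1) {x : G} {c : ℝ}
    (h : ∀ a b : G, |f (a * x * b) - f (a * b)| ≤ c) : wfn f x ≤ c := by
  refine csSup_le (range_nonempty _) ?_
  rintro r ⟨⟨a, b⟩, rfl⟩; exact h a b

lemma le_wfn (hf01 : ∀ x, f x ∈ Icc (0:ℝ) 1) (x a b : G) :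
    |f (a * x * b) - f (a * b)| ≤ wfn f x :=
  le_csSup (wfn_bdd hf01 x) ⟨(a, b), rfl⟩

lemma wfn_nonneg (hf01 : ∀ x, f x ∈ Icc (0:ℝ) 1) (x : G) : 0 ≤ wfn f x :=
  le_trans (abs_nonneg _) (le_wfn hf01 x 1 1)

lemma wfn_one (hf01 : ∀ x, f x ∈ Icc (0:ℝ) 1) : wfn f (1 : G) = 0 := by
  have h1 : wfn f (1 : G) ≤ 0 := wfn_le hf01 (fun a b => by simp)
  exact le_antisymm h1 (wfn_nonneg hf01 1)

lemma wfn_mul (hf01 : ∀ x, f x ∈ Icc (0:ℝ) 1) (x y : G) :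
    wfn f (x * y) ≤ wfn f x + wfn f y := by
  refine wfn_le hf01 (fun a b => ?_)
  have h1 : |f (a * x * (y * b)) - f (a * (y * b))| ≤ wfn f x := le_wfn hf01 x a (y * b)
  have h2 : |f (a * y * b) - f (a * b)| ≤ wfn f y := le_wfn hf01 y a b
  calc |f (a * (x * y) * b) - f (a * b)|
      ≤ |f (a * (x * y) * b) - f (a * y * b)| + |f (a * y * b) - f (a * b)| := abs_sub_le _ _ _
    _ ≤ wfn f x + wfn f y := by
        refine add_le_add ?_ h2
        have e1 : a * (x * y) * b = a * x * (y * b) := by group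
        have e2 : a * y * b = a * (y * b) := by group
        rw [e1, e2]; exact h1

lemma wfn_inv (hf01 : ∀ x, f x ∈ Icc (0:ℝ) 1) (x : G) : wfn f x⁻¹ ≤ wfn f x := by
  refine wfn_le hf01 (fun a b => ?_)
  have := le_wfn hf01 x (a * x⁻¹) b
  have e1 : a * x⁻¹ * x * b = a * b := by group
  have e2 : a * x⁻¹ * b = a * x⁻¹ * b := rfl
  rw [e1] at this
  rw [abs_sub_comm]
  exact this

lemma wfn_conj (hf01 : ∀ x, f x ∈ Icc (0:ℝ) 1) (g x : G) : wfn f (g * x * g⁻¹) ≤ wfn f x := by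
  refine wfn_le hf01 (fun a b => ?_)
  have := le_wfn hf01 x (a * g) (g⁻¹ * b)
  have e1 : a * g * x * (g⁻¹ * b) = a * (g * x * g⁻¹) * b := by group
  have e2 : a * g * (g⁻¹ * b) = a * b := by group
  rwa [e1, e2] at this

lemma wfn_continuous (hf : Continuous f) (hf01 : ∀ x, f x ∈ Icc (0:ℝ) 1) :
    Continuous (wfn f) := by
  rw [continuous_iff_continuousAt]
  intro x₀
  rw [Metric.continuousAt_iff']
  intro ε hε
  obtain ⟨V, hVo, hV1, hVsymm, hVs⟩ := exists_conj_small f hf (half_pos hε)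
  have key : ∀ x y : G, y⁻¹ * x ∈ V → wfn f x ≤ wfn f y + ε / 2 := by
    intro x y hxy
    refine wfn_le hf01 (fun a b => ?_)
    have hx : a * x * b = (a * y) * (y⁻¹ * x) * b := by group
    calc |f (a * x * b) - f (a * b)|
        ≤ |f (a * x * b) - f (a * y * b)| + |f (a * y * b) - f (a * b)| := abs_sub_le _ _ _
      _ ≤ ε / 2 + wfn f y := by
          refine add_le_add ?_ (le_wfn hf01 y a b)
          rw [hx]
          exact hVs (a * y) b _ hxy
      _ = wfn f y + ε / 2 := by ring
  have hmem : {y : G | x₀⁻¹ * y ∈ V} ∈ nhds x₀ := by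
    have : IsOpen {y : G | x₀⁻¹ * y ∈ V} := hVo.preimage (by fun_prop)
    exact this.mem_nhds (by simp [hV1])
  refine Filter.eventually_of_mem hmem ?_
  intro y hy
  have h1 : wfn f y ≤ wfn f x₀ + ε / 2 := key y x₀ hy
  have h2 : wfn f x₀ ≤ wfn f y + ε / 2 := by
    refine key x₀ y ?_
    have := hVsymm _ hy
    simpa [mul_inv_rev] using this
  have : |wfn f y - wfn f x₀| ≤ ε / 2 := abs_sub_le_iff.mpr ⟨by linarith, by linarith⟩
  calc dist (wfn f y) (wfn f x₀) = |wfn f y - wfn f x₀| := rfl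
    _ ≤ ε / 2 := this
    _ < ε := by linarith

end Wfn

/-- Extension lemma: a continuous map from a closed subset of `Zu` to a compact T2 space with
a countable separating family of real functions extends continuously to all of `Zu`. -/
lemma Zu.exists_extension {K : Type u} [TopologicalSpace K] [CompactSpace K] [T2Space K]
    [Nonempty K] (e : ℕ → K → ℝ) (hec : ∀ m, Continuous (e m))
    (hsep : ∀ k k', (∀ m, e m k = e m k') → k = k')
    {F : Set (Zu.{u})} (hF : IsClosed F) {γ : F → K} (hγ : Continuous γ) :
    ∃ g : Zu.{u} → K, Continuous g ∧ ∀ x : F, g ↑x = γ x := by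
  classical
  -- Tietze extensions of the coordinates of γ
  have hH : ∀ m : ℕ, ∃ H : C(Zu.{u}, ℝ), ∀ x : F, H ↑x = e m (γ x) := by
    intro m
    obtain ⟨g, hg⟩ := ContinuousMap.exists_restrict_eq (Y := ℝ) hF
      ⟨fun x : F => e m (γ x), (hec m).comp hγ⟩
    exact ⟨g, fun x => by
      have := congrFun (congrArg (fun u : C(F, ℝ) => (u : F → ℝ)) hg) x
      simpa using this⟩
  choose H hHs using hH
  -- the discrepancy function
  set term : ℕ → Zu.{u} → K → ℝ :=
    fun m z k => (1 / 2 : ℝ) ^ m * min |H m z - e m k| 1 with hterm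
  set dd : Zu.{u} → K → ℝ := fun z k => ∑' m, term m z k with hdd
  have hterm_nonneg : ∀ m z k, 0 ≤ term m z k := by
    intro m z k
    apply mul_nonneg (by positivity)
    exact le_min (abs_nonneg _) zero_le_one
  have hterm_le : ∀ m z k, term m z k ≤ (1 / 2 : ℝ) ^ m := by
    intro m z k
    have h1 : min |H m z - e m k| 1 ≤ 1 := min_le_right _ _
    calc term m z k ≤ (1 / 2 : ℝ) ^ m * 1 :=
          mul_le_mul_of_nonneg_left h1 (by positivity)
      _ = (1 / 2 : ℝ) ^ m := mul_one _
  have hsummable : Summable fun m : ℕ => (1 / 2 : ℝ) ^ m :=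
    summable_geometric_of_lt_one (by norm_num) (by norm_num)
  have hsum : ∀ z k, Summable fun m => term m z k := fun z k =>
    Summable.of_nonneg_of_le (fun m => hterm_nonneg m z k) (fun m => hterm_le m z k) hsummable
  have hddc : Continuous fun p : Zu.{u} × K => dd p.1 p.2 := by
    refine continuous_tsum (fun m => ?_) hsummable (fun m p => ?_)
    · have : Continuous fun p : Zu.{u} × K => |H m p.1 - e m p.2| :=
        ((H m).continuous.comp continuous_fst |>.sub ((hec m).comp continuous_snd)).abs
      fun_prop
    · rw [Real.norm_eq_abs, abs_of_nonneg (hterm_nonneg m p.1 p.2)]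
      exact hterm_le m p.1 p.2
  have hdd_nonneg : ∀ z k, 0 ≤ dd z k := fun z k => tsum_nonneg (fun m => hterm_nonneg m z k)
  have hdd_zero : ∀ (x : F), dd ↑x (γ x) = 0 := by
    intro x
    have : ∀ m, term m (↑x) (γ x) = 0 := by
      intro m
      rw [hterm]
      simp only
      rw [hHs m x]
      simp
    simp only [hdd]
    rw [tsum_congr this, tsum_zero]
  have hdd_eq : ∀ (x : F) (k : K), dd ↑x k = 0 → k = γ x := by
    intro x k h0
    refine hsep k (γ x) (fun m => ?_)
    have hall : ∀ n, term n (↑x) k = 0 := by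
      intro n
      have hle : term n (↑x) k ≤ dd ↑x k :=
        Summable.le_tsum (hsum _ _) n (fun j _ => hterm_nonneg j _ _)
      rw [h0] at hle
      exact le_antisymm hle (hterm_nonneg n _ _)
    have hmin0 : min |H m (↑x : Zu.{u}) - e m k| 1 = 0 := by
      have h := hall m
      rw [hterm] at h
      simp only at h
      have h2 : (1 / 2 : ℝ) ^ m ≠ 0 := by positivity
      exact (mul_eq_zero.mp h).resolve_left h2
    have habs : |H m (↑x : Zu.{u}) - e m k| = 0 := by
      rcases min_eq_iff.mp hmin0 with h | h
      · exact h.1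
      · linarith [h.1]
    have h3 := abs_eq_zero.mp habs
    have hx := hHs m x
    nlinarith [hx, h3]
  -- the minimizer set
  set E : Set (Zu.{u} × K) := {p | ∀ k', dd p.1 p.2 ≤ dd p.1 k'} with hE
  have hEclosed : IsClosed E := by
    have : E = ⋂ k', {p : Zu.{u} × K | dd p.1 p.2 ≤ dd p.1 k'} := by ext p; simp [hE]
    rw [this]
    refine isClosed_iInter (fun k' => isClosed_le hddc ?_)
    exact hddc.comp ((continuous_fst).prodMk
      (continuous_const (y := k') |>.comp continuous_fst)) |>.congr (fun p => rfl)
  haveI : CompactSpace E := isCompact_iff_compactSpace.mp (hEclosed.isCompact)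
  have hEsur : Surjective fun p : E => (p : Zu.{u} × K).1 := by
    intro z
    obtain ⟨k₀, -, hk₀⟩ := isCompact_univ.exists_isMinOn univ_nonempty
      ((hddc.comp ((continuous_const (y := z)).prodMk continuous_id)).continuousOn)
    exact ⟨⟨(z, k₀), fun k' => hk₀ (mem_univ k')⟩, rfl⟩
  obtain ⟨h, hhc, hhs⟩ := Zu.projective (f := fun z : Zu.{u} => z)
    (g := fun p : E => (p : Zu.{u} × K).1) continuous_id
    (continuous_fst.comp continuous_subtype_val) hEsur
  refine ⟨fun z => ((h z : Zu.{u} × K)).2,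
    (continuous_snd.comp continuous_subtype_val).comp hhc, ?_⟩
  intro x
  have hp1 : ((h ↑x : Zu.{u} × K)).1 = ↑x := hhs ↑x
  have hmin : dd ((h ↑x : Zu.{u} × K)).1 ((h ↑x : Zu.{u} × K)).2 ≤
      dd ((h ↑x : Zu.{u} × K)).1 (γ x) := (h ↑x).2 (γ x)
  rw [hp1, hdd_zero x] at hmin
  exact hdd_eq x _ (le_antisymm hmin (hdd_nonneg _ _))


section Wfn2
variable {G : Type u} [Group G] [TopologicalSpace G] [IsTopologicalGroup G]
  [CompactSpace G] [T2Space G]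

lemma wfn' (n₀ : G) (hne : n₀ ≠ (1 : G)) :
    ∃ w : G → ℝ, Continuous w ∧ (∀ x, 0 ≤ w x) ∧ (∀ x y, w (x * y) ≤ w x + w y) ∧
      (∀ x, w x⁻¹ ≤ w x) ∧ (∀ g x, w (g * x * g⁻¹) ≤ w x) ∧ w 1 = 0 ∧ 1 ≤ w n₀ := by
  haveI : NormalSpace G := inferInstance
  obtain ⟨f, hf0, hf1, hf01⟩ := exists_continuous_zero_one_of_isClosed
    (isClosed_singleton (x := (1 : G))) (isClosed_singleton (x := n₀))
    (by simpa [Set.disjoint_singleton] using hne.symm)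
  refine ⟨wfn (f : G → ℝ), wfn_continuous f.continuous hf01, wfn_nonneg hf01,
    wfn_mul hf01, fun x => wfn_inv hf01 x, fun g x => wfn_conj hf01 g x, wfn_one hf01, ?_⟩
  have h := le_wfn (f := (f : G → ℝ)) hf01 n₀ 1 1
  have hfn₀ : (f : G → ℝ) n₀ = 1 := hf1 rfl
  have hf1' : (f : G → ℝ) (1 : G) = 0 := hf0 rfl
  rw [one_mul, mul_one, one_mul, hfn₀, hf1'] at h
  simpa using h
end Wfn2

section QFun
variable {G : Type u} [Group G] [TopologicalSpace G] [IsTopologicalGroup G]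
  [CompactSpace G] [T2Space G]

/-- Canonical map between coset spaces, no normality required. -/
def qfun (N' N : Subgroup G) (h : N' ≤ N) : G ⧸ N' → G ⧸ N :=
  fun u => Quotient.liftOn' u (fun x => (QuotientGroup.mk x : G ⧸ N))
    (fun a b hab => by
      apply Quotient.sound'
      exact QuotientGroup.leftRel_apply.mpr (h (QuotientGroup.leftRel_apply.mp hab)))

@[simp] lemma qfun_mk {N' N : Subgroup G} (h : N' ≤ N) (x : G) :
    qfun N' N h (QuotientGroup.mk x) = QuotientGroup.mk x := rfl

lemma qfun_continuous {N' N : Subgroup G} (h : N' ≤ N) : Continuous (qfun N' N h) := by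
  rw [(QuotientGroup.isQuotientMap_mk N').continuous_iff]
  exact QuotientGroup.continuous_mk

lemma qfun_surjective {N' N : Subgroup G} (h : N' ≤ N) : Surjective (qfun N' N h) := by
  intro u
  obtain ⟨x, rfl⟩ := QuotientGroup.mk_surjective u
  exact ⟨QuotientGroup.mk x, rfl⟩

lemma qfun_qfun {N'' N' N : Subgroup G} (h1 : N'' ≤ N') (h2 : N' ≤ N) (u : G ⧸ N'') :
    qfun N' N h2 (qfun N'' N' h1 u) = qfun N'' N (h1.trans h2) u := by
  obtain ⟨x, rfl⟩ := QuotientGroup.mk_surjective u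
  rfl

lemma qfun_self {N : Subgroup G} (u : G ⧸ N) : qfun N N le_rfl u = u := by
  obtain ⟨x, rfl⟩ := QuotientGroup.mk_surjective u
  rfl

lemma qfun_mul {N' N : Subgroup G} [N'.Normal] [N.Normal] (h : N' ≤ N) (u v : G ⧸ N') :
    qfun N' N h (u * v) = qfun N' N h u * qfun N' N h v := by
  obtain ⟨x, rfl⟩ := QuotientGroup.mk_surjective u
  obtain ⟨y, rfl⟩ := QuotientGroup.mk_surjective v
  rfl

lemma qfun_inv {N' N : Subgroup G} [N'.Normal] [N.Normal] (h : N' ≤ N) (u : G ⧸ N') :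
    qfun N' N h u⁻¹ = (qfun N' N h u)⁻¹ := by
  obtain ⟨x, rfl⟩ := QuotientGroup.mk_surjective u
  rfl

lemma qfun_one {N' N : Subgroup G} [N'.Normal] [N.Normal] (h : N' ≤ N) :
    qfun N' N h 1 = 1 := rfl

/-- The successor step: lifting a partial solution along a metrizable-kernel quotient. -/
lemma successor_step {F : Set (Zu.{u})} (hF : IsClosed F) {lam : F → G} (hlamc : Continuous lam)
    (N' N : Subgroup G) [N'.Normal] [N.Normal] (hle : N' ≤ N)
    (hN'c : IsClosed (N' : Set G)) (hNc : IsClosed (N : Set G))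
    (w : G → ℝ) (hwc : Continuous w) (hw0 : ∀ x, 0 ≤ w x)
    (hwmul : ∀ x y, w (x * y) ≤ w x + w y) (hwinv : ∀ x, w x⁻¹ ≤ w x)
    (hwN' : ∀ n ∈ N', w n = 0) (hker : ∀ a, a ∈ N → w a = 0 → a ∈ N')
    (gN : Zu.{u} → G ⧸ N) (hgc : Continuous gN)
    (hgb : ∀ x : F, gN ↑x = QuotientGroup.mk (lam x)) :
    ∃ gN' : Zu.{u} → G ⧸ N', Continuous gN' ∧ (∀ x : F, gN' ↑x = QuotientGroup.mk (lam x)) ∧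
      ∀ z, qfun N' N hle (gN' z) = gN z := by
  classical
  haveI : IsClosed ((N' : Set G)) := hN'c
  haveI : IsClosed ((N : Set G)) := hNc
  haveI : T3Space (G ⧸ N') := QuotientGroup.instT3Space N'
  haveI : T3Space (G ⧸ N) := QuotientGroup.instT3Space N
  -- w inversion is an equality
  have hwinv' : ∀ x, w x⁻¹ = w x := fun x =>
    le_antisymm (hwinv x) (by simpa using hwinv x⁻¹)
  -- w descends to G ⧸ N'
  have hwright : ∀ (a : G) (n : G), n ∈ N' → w (a * n) = w a := by
    intro a n hn
    have h1 : w (a * n) ≤ w a := by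
      have := hwmul a n; rw [hwN' n hn] at this; simpa using this
    have h2 : w a ≤ w (a * n) := by
      have h3 := hwmul (a * n) n⁻¹
      have hn' : w n⁻¹ = 0 := by rw [hwinv' n]; exact hwN' n hn
      rw [hn'] at h3
      simpa using h3
    exact le_antisymm h1 h2
  set WB : G ⧸ N' → ℝ := fun u => Quotient.liftOn' u w
    (fun a b hab => by
      have h := QuotientGroup.leftRel_apply.mp hab
      have h4 := hwright a (a⁻¹ * b) h
      rw [mul_inv_cancel_left] at h4
      exact h4.symm) with hWB
  have hWBmk : ∀ x : G, WB (QuotientGroup.mk x) = w x := fun x => rfl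
  have hWBc : Continuous WB := by
    rw [(QuotientGroup.isQuotientMap_mk N').continuous_iff]
    exact hwc
  have hWB0 : ∀ u, 0 ≤ WB u := by
    intro u; obtain ⟨x, rfl⟩ := QuotientGroup.mk_surjective u
    rw [hWBmk]; exact hw0 x
  have hWBmul : ∀ u v, WB (u * v) ≤ WB u + WB v := by
    intro u v
    obtain ⟨x, rfl⟩ := QuotientGroup.mk_surjective u
    obtain ⟨y, rfl⟩ := QuotientGroup.mk_surjective v
    rw [← QuotientGroup.mk_mul, hWBmk, hWBmk, hWBmk]
    exact hwmul x y
  have hWBinv : ∀ u, WB u⁻¹ = WB u := by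
    intro u
    obtain ⟨x, rfl⟩ := QuotientGroup.mk_surjective u
    rw [← QuotientGroup.mk_inv, hWBmk, hWBmk]
    exact hwinv' x
  have hWBone : WB 1 = 0 := by
    have : (1 : G ⧸ N') = QuotientGroup.mk 1 := rfl
    rw [this, hWBmk]
    exact hwN' 1 (Subgroup.one_mem N')
  -- the lift through the quotient map
  obtain ⟨wl, hwlc, hwl⟩ := Zu.projective (f := gN) (g := qfun N' N hle)
    hgc (qfun_continuous hle) (qfun_surjective hle)
  -- the kernel
  set K : Set (G ⧸ N') := (qfun N' N hle) ⁻¹' {1} with hKdef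
  have hKclosed : IsClosed K := (isClosed_singleton).preimage (qfun_continuous hle)
  haveI : CompactSpace K := isCompact_iff_compactSpace.mp hKclosed.isCompact
  have honeK : (1 : G ⧸ N') ∈ K := by
    show qfun N' N hle 1 = 1
    exact qfun_one hle
  haveI : Nonempty K := ⟨⟨1, honeK⟩⟩
  have hKmul : ∀ u v : G ⧸ N', u ∈ K → v ∈ K → u⁻¹ * v ∈ K := by
    intro u v hu hv
    have hu' : qfun N' N hle u = 1 := hu
    have hv' : qfun N' N hle v = 1 := hv
    show qfun N' N hle (u⁻¹ * v) = 1
    rw [qfun_mul hle, qfun_inv hle, hu', hv']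
    simp
  have hWBker : ∀ u ∈ K, WB u = 0 → u = 1 := by
    intro u hu h0
    obtain ⟨a, rfl⟩ := QuotientGroup.mk_surjective u
    have haN : a ∈ N := by
      have h1 : qfun N' N hle (QuotientGroup.mk a) = 1 := hu
      rw [qfun_mk] at h1
      exact (QuotientGroup.eq_one_iff a).mp h1
    rw [hWBmk] at h0
    exact (QuotientGroup.eq_one_iff a).mpr (hker a haN h0)
  -- pseudo-metric on K
  set dK : K → K → ℝ := fun k k' => WB ((k : G ⧸ N')⁻¹ * (k' : G ⧸ N')) with hdK
  have hdKval : ∀ k k' : K, dK k k' = WB ((k : G ⧸ N')⁻¹ * (k' : G ⧸ N')) := fun _ _ => rfl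
  have hdK0 : ∀ k k', 0 ≤ dK k k' := fun k k' => hWB0 _
  have hdKself : ∀ k : K, dK k k = 0 := by
    intro k
    rw [hdKval, inv_mul_cancel]
    exact hWBone
  have hdKsep : ∀ k k' : K, dK k k' = 0 → k = k' := by
    intro k k' h0
    have hmem : (k : G ⧸ N')⁻¹ * (k' : G ⧸ N') ∈ K := hKmul _ _ k.2 k'.2
    have h1 : (k : G ⧸ N')⁻¹ * (k' : G ⧸ N') = 1 := hWBker _ hmem h0
    exact Subtype.ext (inv_mul_eq_one.mp h1)
  have hdKsymm : ∀ k k' : K, dK k k' = dK k' k := by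
    intro k k'
    rw [hdKval, hdKval]
    have he : (k' : G ⧸ N')⁻¹ * (k : G ⧸ N') = ((k : G ⧸ N')⁻¹ * (k' : G ⧸ N'))⁻¹ := by
      group
    rw [he, hWBinv]
  have hdKtri : ∀ a b c : K, dK a c ≤ dK a b + dK b c := by
    intro a b c
    rw [hdKval, hdKval, hdKval]
    have he : (a : G ⧸ N')⁻¹ * (c : G ⧸ N') =
        ((a : G ⧸ N')⁻¹ * (b : G ⧸ N')) * ((b : G ⧸ N')⁻¹ * (c : G ⧸ N')) := by group
    rw [he]
    exact hWBmul _ _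
  have hdKc : ∀ k : K, Continuous (dK k) := by
    intro k
    apply hWBc.comp
    exact continuous_const.mul continuous_subtype_val
  -- countable dense net in K and separating family
  have hnet : ∀ n : ℕ, ∃ t : Finset K, ∀ k' : K, ∃ c ∈ t, dK c k' < 1 / (n + 1) := by
    intro n
    have hpos : (0 : ℝ) < 1 / (n + 1) := by positivity
    have hcov : (univ : Set K) ⊆ ⋃ c : K, {k' : K | dK c k' < 1 / (n + 1)} := by
      intro k _
      refine mem_iUnion.mpr ⟨k, ?_⟩
      show dK k k < 1 / (n + 1)
      rw [hdKself k]; exact hpos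
    obtain ⟨t, ht⟩ := isCompact_univ.elim_finite_subcover
      (fun c : K => {k' : K | dK c k' < 1 / (n + 1)})
      (fun c => (isOpen_Iio).preimage (hdKc c)) hcov
    refine ⟨t, fun k' => ?_⟩
    obtain ⟨c, hc, hck⟩ := mem_iUnion₂.mp (ht (mem_univ k'))
    exact ⟨c, hc, hck⟩
  choose tt htt using hnet
  set S : Set K := (⋃ n, (tt n : Set K)) ∪ {Classical.arbitrary K} with hS
  have hScount : S.Countable :=
    (countable_iUnion (fun n => (tt n).finite_toSet.countable)).union (countable_singleton _)
  have hSne : S.Nonempty := ⟨Classical.arbitrary K, Or.inr rfl⟩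
  obtain ⟨cseq, hcseq⟩ := hScount.exists_eq_range hSne
  have hsep : ∀ k k' : K, (∀ m, dK (cseq m) k = dK (cseq m) k') → k = k' := by
    intro k k' hkk
    by_contra hne
    have hdpos : 0 < dK k k' :=
      lt_of_le_of_ne (hdK0 _ _) (Ne.symm (fun h => hne (hdKsep _ _ h)))
    obtain ⟨n, hn⟩ := exists_nat_one_div_lt (half_pos hdpos)
    obtain ⟨c, hct, hck⟩ := htt n k
    have hcS : c ∈ S := Or.inl (mem_iUnion.mpr ⟨n, hct⟩)
    rw [hcseq] at hcS
    obtain ⟨m, rfl⟩ := hcS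
    have h5 : dK (cseq m) k < 1 / (n + 1) := hck
    have h6 : dK (cseq m) k' < 1 / (n + 1) := by rw [← hkk m]; exact hck
    have h2 : dK k k' ≤ dK k (cseq m) + dK (cseq m) k' := hdKtri _ _ _
    rw [hdKsymm k (cseq m)] at h2
    have hlt : dK k k' < 2 / (n + 1) := by
      calc dK k k' ≤ dK (cseq m) k + dK (cseq m) k' := h2
        _ < 1 / (n + 1) + 1 / (n + 1) := add_lt_add h5 h6
        _ = 2 / (n + 1) := by ring
    have : 1 / ((n : ℝ) + 1) < dK k k' / 2 := hn
    linarith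
  -- the correction map γ
  have hmemK : ∀ x : F, (wl ↑x)⁻¹ * QuotientGroup.mk (lam x) ∈ K := by
    intro x
    show qfun N' N hle _ = 1
    rw [qfun_mul hle, qfun_inv hle, hwl, qfun_mk, hgb x]
    simp
  have hγc : Continuous (fun x : F => (⟨(wl ↑x)⁻¹ * QuotientGroup.mk (lam x), hmemK x⟩ : K)) := by
    apply Continuous.subtype_mk
    exact ((hwlc.comp continuous_subtype_val).inv).mul
      (QuotientGroup.continuous_mk.comp hlamc)
  obtain ⟨gam, hgamc, hgam⟩ := Zu.exists_extension (K := K)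
    (fun m k => dK (cseq m) k) (fun m => hdKc (cseq m)) hsep hF hγc
  have hc2 : Continuous fun z : Zu.{u} => ((gam z : G ⧸ N')) :=
    continuous_subtype_val.comp hgamc
  refine ⟨fun z => wl z * ↑(gam z), ?_, ?_, ?_⟩
  · exact hwlc.mul hc2
  · intro x
    show wl ↑x * ((gam ↑x : K) : G ⧸ N') = QuotientGroup.mk (lam x)
    rw [hgam x]
    show wl ↑x * ((wl ↑x)⁻¹ * QuotientGroup.mk (lam x)) = _
    group
  · intro z
    show qfun N' N hle (wl z * ↑(gam z)) = gN z
    rw [qfun_mul hle]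
    have hz : qfun N' N hle ↑(gam z) = 1 := (gam z).2
    rw [hz, hwl z, mul_one]
end QFun


section Engine
variable {G : Type u} [Group G] [TopologicalSpace G] [IsTopologicalGroup G]
  [CompactSpace G] [T2Space G]

variable (G) in
/-- Partial solutions to the lifting problem. -/
structure Piece (F : Set (Zu.{u})) (lam : F → G) where
  N : Subgroup G
  normal : N.Normal
  closed : IsClosed (N : Set G)
  g : Zu.{u} → G ⧸ N
  cont : Continuous g
  bdry : ∀ x : F, g ↑x = QuotientGroup.mk (lam x)

variable {F : Set (Zu.{u})} {lam : F → G}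

instance : Preorder (Piece G F lam) where
  le p q := ∃ h : q.N ≤ p.N, ∀ z, qfun q.N p.N h (q.g z) = p.g z
  le_refl p := ⟨le_rfl, fun z => qfun_self _⟩
  le_trans p q r h1 h2 := by
    obtain ⟨hle1, hc1⟩ := h1
    obtain ⟨hle2, hc2⟩ := h2
    refine ⟨hle2.trans hle1, fun z => ?_⟩
    rw [← hc1 z, ← hc2 z, qfun_qfun]

lemma engine (hF : IsClosed F) (hlamc : Continuous lam) (hlams : Surjective lam) :
    ∃ g : Zu.{u} → G, Continuous g ∧ Surjective g := by
  classical
  -- the trivial piece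
  haveI : Subsingleton (G ⧸ (⊤ : Subgroup G)) := QuotientGroup.subsingleton_quotient_top
  have topPiece : Piece G F lam :=
    { N := ⊤
      normal := inferInstance
      closed := by rw [Subgroup.coe_top]; exact isClosed_univ
      g := fun _ => QuotientGroup.mk 1
      cont := continuous_const
      bdry := fun x => Subsingleton.elim _ _ }
  -- Zorn's lemma
  have hzorn : ∀ c : Set (Piece G F lam), IsChain (· ≤ ·) c → BddAbove c := by
    intro c hc
    rcases c.eq_empty_or_nonempty with rfl | hcne
    · exact ⟨topPiece, fun p hp => absurd hp (notMem_empty p)⟩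
    haveI : Nonempty c := hcne.to_subtype
    -- the intersection subgroup
    set NN : Subgroup G := ⨅ p : c, (p : Piece G F lam).N with hNN
    have hNNle : ∀ p : c, NN ≤ (p : Piece G F lam).N := fun p => iInf_le _ p
    haveI hNNnormal : NN.Normal := by
      constructor
      intro n hn g
      rw [hNN, Subgroup.mem_iInf] at hn ⊢
      intro p
      haveI := (p : Piece G F lam).normal
      exact Subgroup.Normal.conj_mem inferInstance n (hn p) g
    have hNNclosed : IsClosed (NN : Set G) := by
      have : (NN : Set G) = ⋂ p : c, ((p : Piece G F lam).N : Set G) := by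
        rw [hNN]; exact Subgroup.coe_iInf
      rw [this]
      exact isClosed_iInter (fun p => (p : Piece G F lam).closed)
    haveI : IsClosed (NN : Set G) := hNNclosed
    haveI : T3Space (G ⧸ NN) := QuotientGroup.instT3Space NN
    -- the closed relation
    set R : Set (Zu.{u} × (G ⧸ NN)) :=
      {q | ∀ p : c, qfun NN (p : Piece G F lam).N (hNNle p) q.2 = (p : Piece G F lam).g q.1}
      with hR
    have hRclosed : IsClosed R := by
      have : R = ⋂ p : c, {q : Zu.{u} × (G ⧸ NN) |
          qfun NN (p : Piece G F lam).N (hNNle p) q.2 = (p : Piece G F lam).g q.1} := by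
        ext q; simp [hR]
      rw [this]
      refine isClosed_iInter (fun p => ?_)
      haveI := (p : Piece G F lam).normal
      haveI : IsClosed (((p : Piece G F lam).N : Set G)) := (p : Piece G F lam).closed
      haveI : T3Space (G ⧸ (p : Piece G F lam).N) :=
        QuotientGroup.instT3Space (p : Piece G F lam).N
      exact isClosed_eq ((qfun_continuous _).comp continuous_snd)
        (((p : Piece G F lam).cont).comp continuous_fst)
    have hHuniq : ∀ z u v, (z, u) ∈ R → (z, v) ∈ R → u = v := by
      intro z u v hu hv
      obtain ⟨a, rfl⟩ := QuotientGroup.mk_surjective u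
      obtain ⟨b, rfl⟩ := QuotientGroup.mk_surjective v
      have hab : ∀ p : c, a⁻¹ * b ∈ (p : Piece G F lam).N := by
        intro p
        have h1 := hu p
        have h2 := hv p
        rw [qfun_mk] at h1 h2
        have := h1.trans h2.symm
        exact QuotientGroup.leftRel_apply.mp (Quotient.exact' this)
      apply Quotient.sound'
      rw [QuotientGroup.leftRel_apply, hNN, Subgroup.mem_iInf]
      exact hab
    have hHex : ∀ z, ∃ u, (z, u) ∈ R := by
      intro z
      -- directed family of nonempty compact fibers
      set A : c → Set (G ⧸ NN) :=
        fun p => qfun NN (p : Piece G F lam).N (hNNle p) ⁻¹' {(p : Piece G F lam).g z} with hA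
      have hAne : ∀ p, (A p).Nonempty := by
        intro p
        obtain ⟨u, hu⟩ := qfun_surjective (hNNle p) ((p : Piece G F lam).g z)
        exact ⟨u, hu⟩
      have hAclosed : ∀ p, IsClosed (A p) := by
        intro p
        haveI := (p : Piece G F lam).normal
        haveI : IsClosed (((p : Piece G F lam).N : Set G)) := (p : Piece G F lam).closed
        haveI : T3Space (G ⧸ (p : Piece G F lam).N) :=
          QuotientGroup.instT3Space (p : Piece G F lam).N
        exact isClosed_singleton.preimage (qfun_continuous _)
      have hsub : ∀ (p q : c), (p : Piece G F lam) ≤ (q : Piece G F lam) → A q ⊆ A p := by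
        rintro p q ⟨hle, hcomp⟩ u hu
        have hu' : qfun NN (q : Piece G F lam).N (hNNle q) u = (q : Piece G F lam).g z := hu
        show qfun NN (p : Piece G F lam).N (hNNle p) u = (p : Piece G F lam).g z
        rw [← hcomp z, ← hu']
        rw [qfun_qfun]
      have hdir : Directed (· ⊇ ·) A := by
        intro p q
        rcases eq_or_ne p q with rfl | hpq
        · exact ⟨p, subset_rfl, subset_rfl⟩
        rcases hc.total p.2 q.2 with h | h
        · exact ⟨q, hsub p q h, subset_rfl⟩
        · exact ⟨p, subset_rfl, hsub q p h⟩
      obtain ⟨u, hu⟩ := IsCompact.nonempty_iInter_of_directed_nonempty_isCompact_isClosed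
        A hdir hAne (fun p => (hAclosed p).isCompact) hAclosed
      refine ⟨u, fun p => ?_⟩
      exact mem_iInter.mp hu p
    obtain ⟨gg, hggc, hgg⟩ := exists_continuous_of_closed_graph hRclosed hHex
      (fun z u v hu hv => hHuniq z u v hu hv)
    have hggb : ∀ x : F, gg ↑x = QuotientGroup.mk (lam x) := by
      intro x
      refine hHuniq ↑x _ _ (hgg ↑x) ?_
      intro p
      rw [qfun_mk]
      exact ((p : Piece G F lam).bdry x).symm
    refine ⟨⟨NN, hNNnormal, hNNclosed, gg, hggc, hggb⟩, ?_⟩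
    intro p hp
    exact ⟨hNNle ⟨p, hp⟩, fun z => hgg z ⟨p, hp⟩⟩
  obtain ⟨m, hm⟩ := zorn_le hzorn
  -- the maximal piece has trivial subgroup
  have hbot : m.N = ⊥ := by
    by_contra hne
    obtain ⟨n₀, hn₀N, hn₀⟩ : ∃ n₀ ∈ m.N, n₀ ≠ (1 : G) := by
      by_contra hall
      push_neg at hall
      exact hne ((Subgroup.eq_bot_iff_forall m.N).mpr hall)
    obtain ⟨w, hwc, hw0, hwmul, hwinv, hwconj, hw1, hwn₀⟩ := wfn' n₀ hn₀
    -- the subgroup H = {w = 0}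
    have hHmul : ∀ x y : G, w x = 0 → w y = 0 → w (x * y) = 0 := by
      intro x y hx hy
      have := hwmul x y
      rw [hx, hy] at this
      exact le_antisymm (by simpa using this) (hw0 _)
    have hHinv : ∀ x : G, w x = 0 → w x⁻¹ = 0 := by
      intro x hx
      have := hwinv x
      rw [hx] at this
      exact le_antisymm this (hw0 _)
    set H : Subgroup G :=
      { carrier := {x | w x = 0}
        one_mem' := hw1
        mul_mem' := fun hx hy => hHmul _ _ hx hy
        inv_mem' := fun hx => hHinv _ hx } with hH
    have hHmem : ∀ x, x ∈ H ↔ w x = 0 := fun x => Iff.rfl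
    haveI := m.normal
    set N' : Subgroup G := m.N ⊓ H with hN'
    haveI hN'normal : N'.Normal := by
      constructor
      intro n hn g
      constructor
      · exact Subgroup.Normal.conj_mem m.normal n hn.1 g
      · show w (g * n * g⁻¹) = 0
        have h1 := hwconj g n
        have h2 : w n = 0 := hn.2
        rw [h2] at h1
        exact le_antisymm h1 (hw0 _)
    have hN'closed : IsClosed (N' : Set G) := by
      have : (N' : Set G) = (m.N : Set G) ∩ {x | w x = 0} := rfl
      rw [this]
      exact m.closed.inter (isClosed_singleton.preimage hwc)
    obtain ⟨gN', hgN'c, hgN'b, hgN'compat⟩ := successor_step hF hlamc N' m.N inf_le_left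
      hN'closed m.closed w hwc hw0 hwmul hwinv
      (fun n hn => hn.2) (fun a ha hw => ⟨ha, hw⟩) m.g m.cont m.bdry
    have hmle : m ≤ ⟨N', hN'normal, hN'closed, gN', hgN'c, hgN'b⟩ :=
      ⟨inf_le_left, fun z => hgN'compat z⟩
    have hge := hm hmle
    obtain ⟨hle', -⟩ := hge
    have : n₀ ∈ N' := hle' hn₀N
    have : w n₀ = 0 := this.2
    linarith
  -- conclude
  obtain ⟨N, nor, cl, g, cont, bdry⟩ := m
  simp only at hbot
  subst hbot
  -- G ≃ₜ G ⧸ ⊥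
  haveI : (⊥ : Subgroup G).Normal := inferInstance
  haveI : IsClosed ((⊥ : Subgroup G) : Set G) := by
    rw [Subgroup.coe_bot]; exact isClosed_singleton
  haveI : T3Space (G ⧸ (⊥ : Subgroup G)) := QuotientGroup.instT3Space ⊥
  have hbij : Bijective (QuotientGroup.mk : G → G ⧸ (⊥ : Subgroup G)) := by
    constructor
    · intro a b hab
      have := QuotientGroup.leftRel_apply.mp (Quotient.exact' hab)
      rw [Subgroup.mem_bot] at this
      exact inv_mul_eq_one.mp this
    · exact QuotientGroup.mk_surjective
  let e : G ≃ₜ (G ⧸ (⊥ : Subgroup G)) :=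
    Continuous.homeoOfEquivCompactToT2 (f := Equiv.ofBijective _ hbij) QuotientGroup.continuous_mk
  refine ⟨fun z => e.symm (g z), e.symm.continuous.comp cont, ?_⟩
  intro x
  obtain ⟨y, hy⟩ := hlams x
  refine ⟨↑y, ?_⟩
  show e.symm (g ↑y) = x
  rw [bdry y, hy]
  apply e.injective
  rw [Homeomorph.apply_symm_apply]
  have hcalc : e x = QuotientGroup.mk x := rfl
  rw [hcalc]
end Engine


end SeparableCompactGroup

/-- If a compact Hausdorff topological group is homeomorphic to a subspace of a
separable Hausdorff space, then it is separable. -/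
theorem separable_of_compactGroup_embeds (G : Type u) [Group G] [TopologicalSpace G]
    [IsTopologicalGroup G] [CompactSpace G] [T2Space G]
    (X : Type v) [TopologicalSpace X] [T2Space X] [SeparableSpace X]
    (s : Set X) (h : Nonempty (G ≃ₜ s)) : SeparableSpace G := by
  classical
  obtain ⟨e⟩ := h
  haveI : Nonempty G := ⟨1⟩
  have hφc : Continuous (fun g : G => ((e g : s) : X)) :=
    continuous_subtype_val.comp e.continuous
  have hφi : Function.Injective (fun g : G => ((e g : s) : X)) :=
    Subtype.val_injective.comp e.injective
  obtain ⟨F, lam, hF, hlamc, hlams⟩ := exists_closed_surjection_from_Zu hφc hφi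
  obtain ⟨g, hgc, hgs⟩ := engine hF hlamc hlams
  exact (hgs.denseRange).separableSpace hgc
end

section
/- A topological group G is separable whenever it contains a closed subgroup H such that both H and the quotient space G/H are separable; in particular, separability is a three-space property for topological groups. -/
open TopologicalSpace

/-- If a topological group `G` has a closed subgroup `H` such that both `H` and the
left coset space `G/H` are separable, then `G` is separable. -/
theorem separable_of_subgroup_and_quotient_separable (G : Type u) [Group G]
    [TopologicalSpace G] [IsTopologicalGroup G] (H : Subgroup G)
    (hclosed : IsClosed (H : Set G)) (hH : SeparableSpace H)
    (hq : SeparableSpace (G ⧸ H)) : SeparableSpace G := by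
  obtain ⟨S, hScount, hSdense⟩ := exists_countable_dense H
  obtain ⟨Q, hQcount, hQdense⟩ := exists_countable_dense (G ⧸ H)
  refine ⟨⟨(fun p : (G ⧸ H) × H => p.1.out * (p.2 : G)) '' (Q ×ˢ S),
    (hQcount.prod hScount).image _, ?_⟩⟩
  rw [dense_iff_inter_open]
  intro U hU hUne
  obtain ⟨x, hx⟩ := hUne
  have hπU : IsOpen ((QuotientGroup.mk : G → G ⧸ H) '' U) :=
    QuotientGroup.isOpenMap_coe U hU
  obtain ⟨q, hqQ, hqU⟩ := hQdense.exists_mem_open hπU ⟨_, ⟨x, hx, rfl⟩⟩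
  obtain ⟨u, huU, huq⟩ := hqU
  have hmem : q.out⁻¹ * u ∈ H := by
    have h1 : (QuotientGroup.mk q.out : G ⧸ H) = ↑u := by
      rw [QuotientGroup.out_eq', huq]
    exact QuotientGroup.eq.mp h1
  have hWopen : IsOpen {h : H | q.out * (h : G) ∈ U} := by
    have : Continuous fun h : H => q.out * (h : G) :=
      (continuous_const.mul continuous_subtype_val)
    exact this.isOpen_preimage U hU
  obtain ⟨s, hsS, hsW⟩ := hSdense.exists_mem_open hWopen
    ⟨⟨q.out⁻¹ * u, hmem⟩, by simp [huU]⟩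
  exact ⟨q.out * (s : G), hsW, ⟨(q, s), ⟨hqQ, hsS⟩, rfl⟩⟩
end

section
/- Every Hausdorff topological group of countable cellularity is ω-narrow. -/
open Topology Pointwise

/-- A topological group is ω-narrow if it is covered by countably many translates of
every neighborhood of the identity. -/
def OmegaNarrow (G : Type u) [Group G] [TopologicalSpace G] : Prop :=
  ∀ U ∈ 𝓝 (1 : G), ∃ C : Set G, C.Countable ∧ Set.univ ⊆ C * U

/-- A space has countable cellularity if every pairwise disjoint family of nonempty
open sets is countable. -/
def CountableCellularity (X : Type u) [TopologicalSpace X] : Prop :=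
  ∀ S : Set (Set X), (∀ U ∈ S, IsOpen U ∧ U.Nonempty) → S.PairwiseDisjoint id → S.Countable

/-- Every Hausdorff topological group of countable cellularity is ω-narrow. -/
theorem omegaNarrow_of_countableCellularity (G : Type u) [Group G] [TopologicalSpace G]
    [IsTopologicalGroup G] [T2Space G] (h : CountableCellularity G) : OmegaNarrow G := by
  intro U hU
  obtain ⟨W, hWo, hW1, hWU⟩ := exists_open_nhds_one_mul_subset hU
  set V : Set G := W ∩ W⁻¹ with hVdef
  have hVo : IsOpen V := hWo.inter hWo.inv
  have hV1 : (1 : G) ∈ V := ⟨hW1, by simpa using hW1⟩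
  have hVinv : V⁻¹ ⊆ W := fun b hb => by
    have : b⁻¹ ∈ W⁻¹ := hb.2
    simpa using this
  have hVW : V ⊆ W := fun b hb => hb.1
  have hVU : V * V⁻¹ ⊆ U := fun x hx => by
    obtain ⟨a, ha, b, hb, rfl⟩ := hx
    exact hWU (Set.mul_mem_mul (hVW ha) (hVinv hb))
  -- Zorn: maximal A with pairwise disjoint translates a • V
  obtain ⟨A, hAmax⟩ := zorn_subset {A : Set G | A.PairwiseDisjoint (· • V)} (by
    intro c hc hchain
    refine ⟨⋃₀ c, ?_, fun s hs => Set.subset_sUnion_of_mem hs⟩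
    intro a ha b hb hab
    obtain ⟨s, hs, has⟩ := ha
    obtain ⟨t, ht, hbt⟩ := hb
    rcases hchain.total hs ht with hst | hts
    · exact hc ht (hst has) hbt hab
    · exact hc hs has (hts hbt) hab)
  have hA : A.PairwiseDisjoint (· • V) := hAmax.prop
  -- A is countable
  have hinj : Set.InjOn (· • V) A := by
    intro a ha b hb hab
    by_contra hne
    have hd : Disjoint (a • V) (b • V) := hA ha hb hne
    rw [show a • V = (fun x => x • V) a from rfl, hab] at hd
    have : b • V = ∅ := disjoint_self.mp hd
    exact (Set.Nonempty.smul_set ⟨1, hV1⟩ : (b • V).Nonempty).ne_empty this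
  have hAcnt : A.Countable := by
    have hScnt : ((· • V) '' A).Countable := by
      apply h
      · rintro _ ⟨a, ha, rfl⟩
        exact ⟨hVo.smul a, Set.Nonempty.smul_set ⟨1, hV1⟩⟩
      · rintro _ ⟨a, ha, rfl⟩ _ ⟨b, hb, rfl⟩ hne
        exact hA ha hb (fun hab => hne (by rw [hab]))
    exact Set.countable_of_injective_of_countable_image hinj hScnt
  refine ⟨A, hAcnt, fun g _ => ?_⟩
  -- maximality: g • V meets some a • V
  have hmeet : ∃ a ∈ A, ¬Disjoint (g • V) (a • V) := by
    by_cases hg : g ∈ A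
    · exact ⟨g, hg, fun hd => (Set.Nonempty.smul_set ⟨1, hV1⟩ : (g • V).Nonempty).ne_empty
        (disjoint_self.mp hd)⟩
    · by_contra hcon
      push_neg at hcon
      have hins : (insert g A).PairwiseDisjoint (· • V) := by
        apply hA.insert
        intro b hb hne
        exact hcon b hb
      exact hg (hAmax.2 hins (Set.subset_insert g A) (Set.mem_insert g A))
  obtain ⟨a, haA, hnd⟩ := hmeet
  rw [Set.not_disjoint_iff] at hnd
  obtain ⟨x, hxg, hxa⟩ := hnd
  obtain ⟨v, hv, rfl⟩ := hxg
  obtain ⟨w, hw, hws⟩ := hxa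
  -- g • v = a • w, so g = a * w * v⁻¹
  have hmul : g * v = a * w := by simpa [smul_eq_mul] using hws.symm
  have hgeq : g = a * (w * v⁻¹) := by
    rw [← mul_assoc, eq_mul_inv_iff_mul_eq]
    exact hmul
  rw [hgeq]
  exact Set.mul_mem_mul haA (hVU (Set.mul_mem_mul hw (Set.inv_mem_inv.mpr hv)))
end

section
/- Every subgroup of an ω-narrow topological group is ω-narrow. -/
open Topology Pointwise

/-- Every subgroup of an ω-narrow topological group is ω-narrow. -/
theorem omegaNarrow_subgroup (G : Type u) [Group G] [TopologicalSpace G]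
    [IsTopologicalGroup G] (hG : OmegaNarrow G) (H : Subgroup G) : OmegaNarrow H := by
  intro U hU
  -- pull back to a neighborhood V of 1 in G
  rw [show (𝓝 (1 : H)) = Filter.comap Subtype.val (𝓝 ((1 : H) : G)) from nhds_induced _ _] at hU
  obtain ⟨V, hV, hVU⟩ := hU
  -- split: W with ∀ v w ∈ W, v * w ∈ V
  obtain ⟨W0, hW0, hsplit⟩ := exists_nhds_one_split hV
  set W : Set G := W0 ∩ W0⁻¹ with hWdef
  have hW : W ∈ 𝓝 (1 : G) := Filter.inter_mem hW0 (inv_mem_nhds_one G hW0)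
  have hWW : ∀ v ∈ W, ∀ w ∈ W, v⁻¹ * w ∈ V := by
    intro v hv w hw
    exact hsplit _ (by simpa using hv.2) _ hw.1
  obtain ⟨C, hCco, hCcov⟩ := hG W hW
  classical
  -- for each c, choose an element of H in c • W if one exists
  let g : G → H := fun c =>
    if h : ∃ x : H, ∃ w ∈ W, c * w = (x : G) then h.choose else 1
  refine ⟨g '' C, hCco.image g, ?_⟩
  rintro h -
  obtain ⟨c, hc, w, hw, hcw⟩ := hCcov (Set.mem_univ (h : G))
  have hex : ∃ x : H, ∃ w' ∈ W, c * w' = (x : G) := ⟨h, w, hw, hcw⟩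
  set x : H := g c with hxdef
  have hx : ∃ w' ∈ W, c * w' = (x : G) := by
    rw [hxdef]; simp only [g, dif_pos hex]; exact hex.choose_spec
  obtain ⟨w', hw', hcw'⟩ := hx
  have hmem : ((x⁻¹ * h : H) : G) ∈ V := by
    have : ((x⁻¹ * h : H) : G) = w'⁻¹ * w := by
      push_cast
      rw [← hcw, ← hcw']
      group
    rw [this]
    exact hWW _ hw' _ hw
  have hU' : x⁻¹ * h ∈ U := hVU hmem
  exact ⟨x, ⟨c, hc, rfl⟩, x⁻¹ * h, hU', by group⟩
end

section
/- If G is an ω-narrow topological group and N a closed subgroup such that the quotient space G/N is locally compact Hausdorff, then G/N is σ-compact. -/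
open Topology Pointwise

/-- If `G` is an ω-narrow topological group and `N` a closed subgroup such that the
left coset space `G/N` is locally compact Hausdorff, then `G/N` is σ-compact. -/
theorem sigmaCompact_quotient_of_omegaNarrow (G : Type u) [Group G] [TopologicalSpace G]
    [IsTopologicalGroup G] (hG : OmegaNarrow G) (N : Subgroup G)
    (hclosed : IsClosed (N : Set G))
    (hlc : LocallyCompactSpace (G ⧸ N)) (hT2 : T2Space (G ⧸ N)) :
    SigmaCompactSpace (G ⧸ N) := by
  obtain ⟨K, hKc, hKmem⟩ := exists_compact_mem_nhds ((1 : G) : G ⧸ N)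
  have hU : (QuotientGroup.mk ⁻¹' K : Set G) ∈ 𝓝 (1 : G) := by
    have : Continuous (QuotientGroup.mk : G → G ⧸ N) := continuous_quotient_mk'
    exact this.continuousAt.preimage_mem_nhds (by simpa using hKmem)
  obtain ⟨C, hCcount, hCcover⟩ := hG _ hU
  obtain ⟨f, hf⟩ := Set.Countable.exists_eq_range (hCcount.insert 1) (Set.insert_nonempty _ _)
  refine ⟨⟨fun n => f n • K, fun n => hKc.smul (f n), ?_⟩⟩
  apply Set.eq_univ_of_forall
  intro x
  obtain ⟨g, rfl⟩ := QuotientGroup.mk_surjective x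
  obtain ⟨c, hc, u, hu, rfl⟩ := hCcover (Set.mem_univ g)
  have hc' : c ∈ Set.range f := by rw [← hf]; exact Set.mem_insert_of_mem _ hc
  obtain ⟨n, rfl⟩ := hc'
  exact Set.mem_iUnion.2 ⟨n, ⟨QuotientGroup.mk u, hu, rfl⟩⟩
end

section
/- If a first-countable (e.g., metrizable) topological group G is a subgroup of a topological group X of countable cellularity, then G has a countable base and hence is separable. -/
open TopologicalSpace

open Filter Set Pointwise in
/-- ω-narrowness of a subgroup of a group of countable cellularity: for every
neighborhood `W` of `1` there is a countable subset `D` of the subgroup whose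
translates by `W` cover the subgroup. -/
theorem aux_narrow {X : Type u} [Group X] [TopologicalSpace X] [IsTopologicalGroup X]
    (hX : CountableCellularity X)
    (G : Subgroup X) {W : Set X} (hW : W ∈ nhds (1 : X)) :
    ∃ D : Set X, D.Countable ∧ D ⊆ (G : Set X) ∧
      ∀ g ∈ (G : Set X), ∃ d ∈ D, g⁻¹ * d ∈ W := by
  obtain ⟨V1, hV1o, hV11, hV1W⟩ := exists_open_nhds_one_mul_subset hW
  obtain ⟨V2, hV2o, hV21, hV2V1⟩ := exists_open_nhds_one_mul_subset (hV1o.mem_nhds hV11)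
  set V : Set X := V2 ∩ V2⁻¹ with hV
  have hVo : IsOpen V := hV2o.inter hV2o.inv
  have hV1 : (1 : X) ∈ V := ⟨hV21, by simpa using hV21⟩
  have hVsymm : ∀ x ∈ V, x⁻¹ ∈ V := fun x hx => ⟨hx.2, by simpa using hx.1⟩
  have hVsub : V ⊆ V2 := inter_subset_left
  have hfour : ∀ a b c e : X, a ∈ V2 → b ∈ V2 → c ∈ V2 → e ∈ V2 → a * b * (c * e) ∈ W :=
    fun a b c e ha hb hc he =>
      hV1W (Set.mul_mem_mul (hV2V1 (Set.mul_mem_mul ha hb)) (hV2V1 (Set.mul_mem_mul hc he)))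
  -- Zorn's lemma: a maximal family `M` with pairwise disjoint translates of `V`
  obtain ⟨M, hM⟩ : ∃ M, Maximal (· ∈ {D : Set X | D.PairwiseDisjoint (· • V)}) M := by
    apply zorn_subset
    intro c hc hchain
    refine ⟨⋃₀ c, ?_, fun s hs => subset_sUnion_of_mem hs⟩
    intro d hd d' hd' hne
    obtain ⟨A, hA, hdA⟩ := hd
    obtain ⟨B, hB, hd'B⟩ := hd'
    rcases hchain.total hA hB with hAB | hBA
    · exact hc hB (hAB hdA) hd'B hne
    · exact hc hA hdA (hBA hd'B) hne
  have hMd : M.PairwiseDisjoint (· • V) := hM.prop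
  -- the family of translates is countable by cellularity
  have hSc : ((· • V) '' M).Countable := by
    refine hX _ ?_ ?_
    · rintro U ⟨d, -, rfl⟩
      exact ⟨hVo.smul d, Set.Nonempty.smul_set ⟨1, hV1⟩⟩
    · rintro U ⟨d, hd, rfl⟩ U' ⟨d', hd', rfl⟩ hne
      exact hMd hd hd' (fun h => hne (by rw [h]))
  -- maximality: every translate `x • V` meets some `d • V`, `d ∈ M`
  have hmax : ∀ x : X, ∃ d ∈ M, (x • V ∩ d • V).Nonempty := by
    intro x
    by_contra hcon
    push_neg at hcon
    have hxM : x ∉ M := fun hxM => by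
      have h0 := hcon x hxM
      rw [Set.inter_self] at h0
      exact (Set.Nonempty.smul_set ⟨1, hV1⟩ : (x • V).Nonempty).ne_empty h0
    have hins : (insert x M).PairwiseDisjoint (· • V) := by
      intro a ha b hb hab
      rcases ha with rfl | ha
      · rcases hb with rfl | hb
        · exact absurd rfl hab
        · exact Set.disjoint_iff_inter_eq_empty.2 (hcon b hb)
      · rcases hb with rfl | hb
        · exact (Set.disjoint_iff_inter_eq_empty.2 (hcon a ha)).symm
        · exact hMd ha hb hab
    exact hxM (hM.2 hins (Set.subset_insert x M) (Set.mem_insert x M))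
  -- choose a point of `G` in `U * V` whenever possible
  have hch : ∀ U : Set X, ∃ h ∈ (G : Set X), (U * V ∩ G).Nonempty → h ∈ U * V := by
    intro U
    by_cases hne : (U * V ∩ G).Nonempty
    · obtain ⟨h, h1, h2⟩ := hne
      exact ⟨h, h2, fun _ => h1⟩
    · exact ⟨1, G.one_mem, fun h => absurd h hne⟩
  choose f hfG hfm using hch
  refine ⟨f '' ((· • V) '' M), (hSc.image f), ?_, ?_⟩
  · rintro x ⟨U, -, rfl⟩
    exact hfG U
  · intro g hg
    obtain ⟨d, hdM, x, ⟨v1, hv1, hx1⟩, ⟨v2, hv2, hx2⟩⟩ := hmax g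
    simp only [smul_eq_mul] at hx1 hx2
    -- g = d * v2 * v1⁻¹ ∈ (d • V) * V
    have hgmem : g ∈ (d • V) * V := by
      refine ⟨d * v2, Set.smul_mem_smul_set hv2, v1⁻¹, hVsymm v1 hv1, ?_⟩
      show d * v2 * v1⁻¹ = g
      rw [hx2, ← hx1]; group
    have hnon : ((d • V) * V ∩ G).Nonempty := ⟨g, hgmem, hg⟩
    obtain ⟨u, ⟨v3, hv3, rfl⟩, v4, hv4, hfu⟩ := hfm (d • V) hnon
    simp only [smul_eq_mul] at hfu
    refine ⟨f (d • V), ⟨d • V, ⟨d, hdM, rfl⟩, rfl⟩, ?_⟩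
    have hg' : g = d * v2 * v1⁻¹ := by rw [hx2, ← hx1]; group
    have : g⁻¹ * f (d • V) = v1 * v2⁻¹ * (v3 * v4) := by
      rw [← hfu, hg']; group
    rw [this]
    exact hfour _ _ _ _ (hVsub hv1) (hVsub (hVsymm v2 hv2)) (hVsub hv3) (hVsub hv4)

/-- A first-countable subgroup of a topological group of countable cellularity has a
countable base and hence is separable. -/
theorem secondCountable_of_firstCountable_subgroup (X : Type u) [Group X]
    [TopologicalSpace X] [IsTopologicalGroup X] (hX : CountableCellularity X)
    (G : Subgroup X) [FirstCountableTopology G] :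
    SecondCountableTopology G ∧ SeparableSpace G := by
  -- a countable (antitone) basis of neighborhoods of `1` in `G`
  obtain ⟨V, hV⟩ := (nhds (1 : G)).exists_antitone_basis
  -- for each `n`, a neighborhood `W n` of `1` in `X` whose trace is inside `V n`
  have hWex : ∀ n : ℕ, ∃ W ∈ nhds (1 : X), (Subtype.val : G → X) ⁻¹' W ⊆ V n := by
    intro n
    have h1 : V n ∈ nhds (1 : G) := hV.mem n
    rw [nhds_induced] at h1
    exact h1
  choose W hWn hWV using hWex
  have hD := fun n => aux_narrow hX G (hWn n)
  choose D hDc hDG hDcov using hD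
  -- the countable dense set
  set s : Set G := ⋃ n, (Subtype.val : G → X) ⁻¹' (D n) with hs
  have hsc : s.Countable :=
    Set.countable_iUnion fun n => (hDc n).preimage Subtype.val_injective
  have hsd : Dense s := by
    rw [dense_iff_inter_open]
    intro U hU ⟨x, hx⟩
    have hnb : {v : G | x * v ∈ U} ∈ nhds (1 : G) := by
      have ht : Filter.Tendsto (fun v : G => x * v) (nhds 1) (nhds x) := by
        simpa using (continuous_mul_left x).tendsto (1 : G)
      exact ht (hU.mem_nhds hx)
    obtain ⟨n, hn⟩ := hV.mem_iff.1 hnb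
    obtain ⟨d, hdD, hd⟩ := hDcov n (x : X) x.2
    have hdG : d ∈ G := hDG n hdD
    set d' : G := ⟨d, hdG⟩ with hd'
    have hmem : (x⁻¹ * d' : G) ∈ V n := by
      apply hWV n
      simpa using hd
    have : x * (x⁻¹ * d') ∈ U := hn hmem
    rw [mul_inv_cancel_left] at this
    exact ⟨d', this, Set.mem_iUnion.2 ⟨n, hdD⟩⟩
  have hsep : SeparableSpace G := ⟨⟨s, hsc, hsd⟩⟩
  -- second countability from separability and a countably generated uniformity
  letI : UniformSpace G := IsTopologicalGroup.rightUniformSpace G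
  haveI : (uniformity G).IsCountablyGenerated := by
    rw [uniformity_eq_comap_nhds_one']
    infer_instance
  exact ⟨UniformSpace.secondCountable_of_separable G, hsep⟩
end

section
/- If a metrizable topological group G is topologically isomorphic to a subgroup of a separable topological group, then G is separable. -/
open TopologicalSpace Filter Topology

/-- If a metrizable topological group `G` is topologically isomorphic to a subgroup of a
separable topological group `X`, then `G` is separable. -/
theorem separable_of_metrizable_subgroup (G : Type u) [Group G] [TopologicalSpace G]
    [IsTopologicalGroup G] [MetrizableSpace G]
    (X : Type v) [Group X] [TopologicalSpace X] [IsTopologicalGroup X] [SeparableSpace X]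
    (f : G →* X) (hinj : Function.Injective f) (hind : Topology.IsInducing f) :
    SeparableSpace G := by
  classical
  -- countable basis of neighborhoods of 1 in G
  obtain ⟨U, hU⟩ := (𝓝 (1 : G)).exists_antitone_basis
  -- for each m, a neighborhood V m of 1 in X with f ⁻¹' V m ⊆ U m
  have hcom : ∀ m : ℕ, ∃ V ∈ 𝓝 (1 : X), f ⁻¹' V ⊆ U m := by
    intro m
    have h1 : U m ∈ 𝓝 (1 : G) := hU.1.mem_of_mem trivial
    rw [hind.nhds_eq_comap, map_one] at h1
    exact Filter.mem_comap.1 h1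
  choose V hV hVU using hcom
  -- symmetric neighborhoods S m of 1 with S m * S m ⊆ V m
  have hS : ∀ m : ℕ, ∃ S ∈ 𝓝 (1 : X),
      (∀ s ∈ S, s⁻¹ ∈ S) ∧ ∀ s ∈ S, ∀ s' ∈ S, s * s' ∈ V m := by
    intro m
    obtain ⟨S₀, hS₀, hmul⟩ := exists_nhds_one_split (hV m)
    refine ⟨S₀ ∩ S₀⁻¹, Filter.inter_mem hS₀ (inv_mem_nhds_one X hS₀), ?_, ?_⟩
    · rintro s ⟨hs1, hs2⟩
      exact ⟨hs2, by simpa using hs1⟩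
    · rintro s ⟨hs1, _⟩ s' ⟨hs'1, _⟩
      exact hmul s hs1 s' hs'1
  choose S hSnhds hSsymm hSmul using hS
  -- countable dense subset of X
  obtain ⟨D, Dcount, Ddense⟩ := exists_countable_dense X
  -- choice function
  let P : ℕ → X → Prop := fun m d => ∃ g : G, ∃ s ∈ S m, f g = d * s
  let c : ℕ → X → G := fun m d => if h : P m d then h.choose else 1
  have hc : ∀ m d, P m d → ∃ s ∈ S m, f (c m d) = d * s := by
    intro m d h
    simp only [c, dif_pos h]
    exact h.choose_spec
  refine ⟨⟨Set.image2 c Set.univ D, Set.Countable.image2 Set.countable_univ Dcount c, ?_⟩⟩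
  rw [dense_iff_inter_open]
  intro t ht ⟨g, hg⟩
  -- find m with g * U m ⊆ t
  have h2 : (fun x : G => g * x) ⁻¹' t ∈ 𝓝 (1 : G) := by
    have : ContinuousAt (fun x : G => g * x) 1 := (continuous_mul_left g).continuousAt
    exact this (ht.mem_nhds (by simpa using hg))
  obtain ⟨m, -, hm⟩ := hU.1.mem_iff.1 h2
  -- find d ∈ D with d ∈ f g * S m
  have hN : (fun x : X => f g * x) '' S m ∈ 𝓝 (f g) := by
    have h3 : Filter.map (fun x : X => f g * x) (𝓝 (1 : X)) = 𝓝 (f g * 1) :=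
      (Homeomorph.mulLeft (f g)).map_nhds_eq 1
    rw [mul_one] at h3
    rw [← h3]
    exact Filter.image_mem_map (hSnhds m)
  have hfg : f g ∈ closure D := by rw [Ddense.closure_eq]; trivial
  obtain ⟨d, hdN, hdD⟩ := (mem_closure_iff_nhds.1 hfg) _ hN
  obtain ⟨s, hs, hds⟩ := hdN
  -- the pair (m, d) is good: f g = d * s⁻¹
  have hP : P m d := ⟨g, s⁻¹, hSsymm m s hs, by simp [← hds, mul_assoc]⟩
  obtain ⟨s', hs', hcs'⟩ := hc m d hP
  refine ⟨c m d, ?_, Set.mem_image2_of_mem (Set.mem_univ m) hdD⟩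
  -- show c m d ∈ t
  have key : g⁻¹ * c m d ∈ U m := by
    apply hVU m
    have : f (g⁻¹ * c m d) = s * s' := by
      rw [map_mul, map_inv, hcs', ← hds]
      simp [mul_assoc]
    show f (g⁻¹ * c m d) ∈ V m
    rw [this]
    exact hSmul m _ hs _ hs'
  have := hm key
  simpa using this
end

section
/- Let K and L be subgroups of a topological abelian group G. If K is countably compact and L is ω-bounded, then the subgroup K + L is countably compact. -/
open Pointwise

/-- A topological space is countably compact if every countable open cover has a finite
subcover. -/
def CountablyCompact (X : Type u) [TopologicalSpace X] : Prop :=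
  ∀ U : ℕ → Set X, (∀ n, IsOpen (U n)) → (⋃ n, U n) = Set.univ →
    ∃ F : Finset ℕ, (⋃ n ∈ F, U n) = Set.univ

/-- A topological (additive) group is ω-bounded if the closure of every countable subset
is compact. -/
def OmegaBounded (X : Type u) [TopologicalSpace X] : Prop :=
  ∀ C : Set X, C.Countable → IsCompact (closure C)

open Filter Topology

/-- In a countably compact space, every sequence has a cluster point. -/
lemma CountablyCompact.exists_mapClusterPt {X : Type v} [TopologicalSpace X]
    (hX : CountablyCompact X) (x : ℕ → X) : ∃ p : X, MapClusterPt p atTop x := by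
  by_contra h
  push_neg at h
  set U : ℕ → Set X := fun N => (closure {y | ∃ n ≥ N, x n = y})ᶜ with hUdef
  have hopen : ∀ N, IsOpen (U N) := fun N => isClosed_closure.isOpen_compl
  have hcover : (⋃ N, U N) = Set.univ := by
    ext p
    simp only [Set.mem_iUnion, Set.mem_univ, iff_true]
    have hp := h p
    rw [mapClusterPt_iff_frequently] at hp
    push_neg at hp
    obtain ⟨s, hs, hev⟩ := hp
    obtain ⟨N, hN⟩ := eventually_atTop.mp hev
    refine ⟨N, ?_⟩
    intro hcl
    obtain ⟨y, hy, n, hn, rfl⟩ := mem_closure_iff.mp hcl (interior s) isOpen_interior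
      (mem_interior_iff_mem_nhds.mpr hs)
    exact hN n hn (interior_subset hy)
  obtain ⟨F, hF⟩ := hX U hopen hcover
  set M := F.sup id with hM
  have hxM : x M ∈ ⋃ n ∈ F, U n := hF ▸ Set.mem_univ _
  obtain ⟨N, hNF, hmem⟩ := Set.mem_iUnion₂.mp hxM
  exact hmem (subset_closure ⟨M, Finset.le_sup (f := id) hNF, rfl⟩)

/-- If every sequence has a cluster point, the space is countably compact. -/
lemma countablyCompact_of_mapClusterPt {X : Type v} [TopologicalSpace X]
    (h : ∀ x : ℕ → X, ∃ p : X, MapClusterPt p atTop x) : CountablyCompact X := by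
  intro U hopen hcover
  by_contra hfin
  push_neg at hfin
  have hx : ∀ n : ℕ, ∃ y : X, y ∉ ⋃ i ∈ Finset.range (n + 1), U i := fun n =>
    (Set.ne_univ_iff_exists_notMem _).mp (hfin (Finset.range (n + 1)))
  choose x hx using hx
  obtain ⟨p, hp⟩ := h x
  have hpU : p ∈ ⋃ n, U n := hcover ▸ Set.mem_univ p
  obtain ⟨m, hm⟩ := Set.mem_iUnion.mp hpU
  have hfreq : ∃ᶠ n in atTop, x n ∈ U m :=
    mapClusterPt_iff_frequently.mp hp _ ((hopen m).mem_nhds hm)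
  obtain ⟨n, hn, hxn⟩ := (hfreq.and_eventually (eventually_ge_atTop m)).exists
  exact hx n (Set.mem_biUnion (Finset.mem_range.mpr (Nat.lt_succ_of_le hxn)) hn)

/-- A sequence in the product of a countably compact space and a compact space has a
cluster point. -/
lemma exists_mapClusterPt_prod {X : Type v} {Y : Type w} [TopologicalSpace X]
    [TopologicalSpace Y] [CompactSpace Y] (hX : CountablyCompact X) (z : ℕ → X × Y) :
    ∃ p : X × Y, MapClusterPt p atTop z := by
  by_contra h
  push_neg at h
  obtain ⟨x, hx⟩ := hX.exists_mapClusterPt fun n => (z n).1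
  have key : ∀ c : Y, ∃ (u : Set X) (v : Set Y), u ∈ 𝓝 x ∧ v ∈ 𝓝 c ∧
      ∀ᶠ n in atTop, z n ∉ u ×ˢ v := by
    intro c
    have hc := h (x, c)
    rw [mapClusterPt_iff_frequently] at hc
    push_neg at hc
    obtain ⟨s, hs, hev⟩ := hc
    rw [nhds_prod_eq, Filter.mem_prod_iff] at hs
    obtain ⟨u, hu, v, hv, huv⟩ := hs
    exact ⟨u, v, hu, hv, hev.mono fun n hn hmem => hn (huv hmem)⟩
  choose u v hu hv hev using key
  obtain ⟨t, -, ht⟩ := isCompact_univ.elim_nhds_subcover v fun c _ => hv c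
  have hU' : (⋂ c ∈ t, u c) ∈ 𝓝 x := (Filter.biInter_finset_mem t).mpr fun c _ => hu c
  have hevall : ∀ᶠ n in atTop, ∀ c ∈ t, z n ∉ u c ×ˢ v c :=
    (Filter.eventually_all_finset t).mpr fun c _ => hev c
  have hfreq : ∃ᶠ n in atTop, (z n).1 ∈ ⋂ c ∈ t, u c := mapClusterPt_iff_frequently.mp hx _ hU'
  obtain ⟨n, hn1, hn2⟩ := (hfreq.and_eventually hevall).exists
  obtain ⟨c, hct, hcv⟩ := Set.mem_iUnion₂.mp (ht (Set.mem_univ (z n).2))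
  exact hn2 c hct ⟨Set.mem_iInter₂.mp hn1 c hct, hcv⟩

/-- If `K` and `L` are subgroups of a topological abelian group `G`, `K` is countably
compact and `L` is ω-bounded, then `K + L` is a countably compact subgroup of `G`. -/
theorem countablyCompact_add_of_omegaBounded (G : Type u) [AddCommGroup G]
    [TopologicalSpace G] [IsTopologicalAddGroup G] (K L : AddSubgroup G)
    (hK : CountablyCompact K) (hL : OmegaBounded L) :
    (∃ S : AddSubgroup G, (S : Set G) = (K : Set G) + (L : Set G)) ∧
      CountablyCompact ((K : Set G) + (L : Set G)) := by
  constructor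
  · exact ⟨K ⊔ L, AddSubgroup.add_normal K L⟩
  · apply countablyCompact_of_mapClusterPt
    intro x
    -- decompose each element as a sum
    have hdec : ∀ n : ℕ, ∃ (a : K) (b : L), (x n : G) = (a : G) + (b : G) := by
      intro n
      obtain ⟨a, ha, b, hb, hab⟩ := Set.mem_add.mp (x n).2
      exact ⟨⟨a, ha⟩, ⟨b, hb⟩, hab.symm⟩
    choose κ lam hklam using hdec
    -- the closure of the range of lam in L is compact
    have hC : IsCompact (closure (Set.range lam)) :=
      hL (Set.range lam) (Set.countable_range lam)
    set C : Set L := closure (Set.range lam) with hCdef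
    haveI : CompactSpace C := isCompact_iff_compactSpace.mp hC
    have hlamC : ∀ n, lam n ∈ C := fun n => subset_closure ⟨n, rfl⟩
    set z : ℕ → K × C := fun n => (κ n, ⟨lam n, hlamC n⟩) with hzdef
    obtain ⟨⟨p, q⟩, hpq⟩ := exists_mapClusterPt_prod hK z
    -- map the cluster point through the continuous addition map
    set f : K × C → ((K : Set G) + (L : Set G) : Set G) := fun w =>
      ⟨(w.1 : G) + ((w.2 : L) : G),
        Set.mem_add.mpr ⟨(w.1 : G), w.1.2, ((w.2 : L) : G), (w.2 : L).2, rfl⟩⟩ with hfdef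
    have hfcont : Continuous f := by
      apply Continuous.subtype_mk
      exact (continuous_subtype_val.comp continuous_fst).add
        (continuous_subtype_val.comp (continuous_subtype_val.comp continuous_snd))
    have hfz : f ∘ z = x := by
      funext n
      exact Subtype.ext (hklam n).symm
    refine ⟨f (p, q), ?_⟩
    have := hpq.continuousAt_comp hfcont.continuousAt
    rwa [hfz] at this
end

section
/- There exists a sequence (φ_m)_{m∈ω} of functions from ω to ω with the property: for every k ≥ 1, every injective tuple (m_1,…,m_k) ∈ ω^k, and all tuples (j_{1,1},…,j_{k,1}), (j_{1,2},…,j_{k,2}) ∈ ω^k, there exists n ∈ ω such that φ_{m_i}(n) = j_{i,1} and φ_{m_i}(n+1) = j_{i,2} for all 1 ≤ i ≤ k. -/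
/-- Decode a natural number into a list of naturals. -/
noncomputable def decList (a : ℕ) : List ℕ := Denumerable.ofNat (List ℕ) a

lemma decList_encode (l : List ℕ) : decList (Encodable.encode l) = l := by
  simp [decList]

/-- The universal sequence of functions. -/
noncomputable def Phi (m n : ℕ) : ℕ :=
  if n % 2 = 0 then (decList (n / 2).unpair.1).getD m 0
  else (decList (n / 2).unpair.2).getD m 0

lemma Phi_even (a b m : ℕ) : Phi m (2 * Nat.pair a b) = (decList a).getD m 0 := by
  simp [Phi, Nat.mul_div_cancel_left, Nat.mul_mod_right]

lemma Phi_odd (a b m : ℕ) : Phi m (2 * Nat.pair a b + 1) = (decList b).getD m 0 := by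
  have h1 : (2 * Nat.pair a b + 1) % 2 = 1 := by omega
  have h2 : (2 * Nat.pair a b + 1) / 2 = Nat.pair a b := by omega
  simp [Phi, h1, h2]

/-- There is a sequence `φ : ℕ → ℕ → ℕ` of functions such that for every `k ≥ 1`, every
injective tuple `(m 1, …, m k)` and arbitrary tuples `(j₁ 1, …, j₁ k)`, `(j₂ 1, …, j₂ k)`
there exists `n` with `φ (m i) n = j₁ i` and `φ (m i) (n + 1) = j₂ i` for all `i`. -/
theorem exists_universal_function_sequence :
    ∃ φ : ℕ → ℕ → ℕ, ∀ k : ℕ, 1 ≤ k → ∀ m j₁ j₂ : Fin k → ℕ, Function.Injective m →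
      ∃ n : ℕ, ∀ i : Fin k, φ (m i) n = j₁ i ∧ φ (m i) (n + 1) = j₂ i := by
  refine ⟨Phi, fun k _ m j₁ j₂ hm => ?_⟩
  set N : ℕ := (Finset.univ.sup m) + 1 with hN
  have hmN : ∀ i, m i < N := fun i =>
    Nat.lt_succ_of_le (Finset.le_sup (Finset.mem_univ i))
  -- define the value function
  classical
  have key : ∀ (j : Fin k → ℕ),
      ∃ l : List ℕ, ∀ i, l.getD (m i) 0 = j i := by
    intro j
    refine ⟨List.ofFn (fun x : Fin N =>
      if h : ∃ i, m i = (x : ℕ) then j h.choose else 0), fun i => ?_⟩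
    have hlen : (List.ofFn (fun x : Fin N =>
        if h : ∃ i, m i = (x : ℕ) then j h.choose else 0)).length = N := by rw [List.length_ofFn]
    rw [List.getD_eq_getElem _ _ (by rw [hlen]; exact hmN i)]
    have := List.getElem_ofFn (f := fun x : Fin N =>
      if h : ∃ i', m i' = (x : ℕ) then j h.choose else 0) (i := m i)
      (h := by rw [List.length_ofFn]; exact hmN i)
    rw [this]
    have hex : ∃ i', m i' = ((⟨m i, hmN i⟩ : Fin N) : ℕ) := ⟨i, rfl⟩
    rw [dif_pos hex]
    congr 1
    exact hm hex.choose_spec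
  obtain ⟨l₁, hl₁⟩ := key j₁
  obtain ⟨l₂, hl₂⟩ := key j₂
  refine ⟨2 * Nat.pair (Encodable.encode l₁) (Encodable.encode l₂), fun i => ?_⟩
  rw [Phi_even, Phi_odd, decList_encode, decList_encode]
  exact ⟨hl₁ i, hl₂ i⟩
end

section
/- An ω-narrow (not necessarily abelian) topological group H is topologically isomorphic to a subgroup of a separable topological group if and only if H is ω-narrow and w(H) ≤ 𝔠. -/
open Cardinal Topology TopologicalSpace Pointwise

/-- A topological isomorphism of `H` onto a subgroup of a separable topological group:
a separable topological group `K` together with an injective, inducing homomorphism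
`H →* K`. -/
structure SepGroupEmbedding (H : Type u) [Group H] [TopologicalSpace H] : Type (u + 1) where
  K : Type u
  [groupK : Group K]
  [topK : TopologicalSpace K]
  [tgK : IsTopologicalGroup K]
  [sepK : SeparableSpace K]
  f : H →* K
  inj : Function.Injective f
  inducing : Topology.IsInducing f

open Filter Set

universe u

theorem hmp_separable {ι : Type u} (X : ι → Type u) [tX : ∀ i, TopologicalSpace (X i)]
    (hsep : ∀ i, SeparableSpace (X i)) (hι : #ι ≤ Cardinal.continuum) :
    SeparableSpace (∀ i, X i) := by
  classical
  by_cases hne : ∀ i, Nonempty (X i)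
  case neg =>
    push_neg at hne
    obtain ⟨i, hi⟩ := hne
    have hE : IsEmpty (∀ i, X i) := ⟨fun g => hi.false (g i)⟩
    exact ⟨⟨∅, countable_empty, fun x => (hE.false x).elim⟩⟩
  haveI := hne
  have hd : ∀ i, ∃ u : ℕ → X i, DenseRange u := fun i => exists_dense_seq (X i)
  choose d hd using hd
  have hcard : #ι ≤ #(ℕ → ULift.{u} Bool) := by
    refine hι.trans_eq ?_
    have : #(ℕ → ULift.{u} Bool) = 2 ^ Cardinal.aleph0 := by
      rw [Cardinal.mk_arrow]
      simp
    rw [this, Cardinal.two_power_aleph0]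
  obtain ⟨e⟩ := Cardinal.le_def _ _ |>.1 hcard
  set A := Σ N : ℕ, ((Fin N → ULift.{u} Bool) → ℕ) with hA
  have hAc : Countable A := by infer_instance
  set F : A → ∀ i, X i := fun p i => d i (p.2 fun k => e i k.val) with hF
  have hdense : Dense (Set.range F) := by
    rw [dense_iff_inter_open]
    rintro U hU ⟨x, hx⟩
    obtain ⟨I, u, hu, hsub⟩ := isOpen_pi_iff.1 hU x hx
    have hn : ∀ i, ∃ m, i ∈ I → d i m ∈ u i := by
      intro i
      by_cases hi : i ∈ I
      · obtain ⟨m, hm⟩ := (hd i).exists_mem_open (hu i hi).1 ⟨x i, (hu i hi).2⟩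
        exact ⟨m, fun _ => hm⟩
      · exact ⟨0, fun h => absurd h hi⟩
    choose n hn using hn
    set c : ι → ι → ℕ := fun i j => if h : ∃ k, e i k ≠ e j k then h.choose else 0 with hc
    set N : ℕ := (I.sup fun i => I.sup fun j => c i j) + 1 with hN
    have hsep' : ∀ i ∈ I, ∀ j ∈ I,
        (fun k : Fin N => e i k.val) = (fun k : Fin N => e j k.val) → i = j := by
      intro i hi j hj hij
      by_contra hne'
      have hk : ∃ k, e i k ≠ e j k := by
        by_contra h
        push_neg at h
        exact hne' (e.injective (funext h))
      have hkN : c i j < N := by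
        have h1 : c i j ≤ I.sup fun j => c i j := Finset.le_sup hj
        have h2 : (I.sup fun j => c i j) ≤ I.sup fun i => I.sup fun j => c i j :=
          Finset.le_sup (f := fun i => I.sup fun j => c i j) hi
        exact lt_of_le_of_lt (h1.trans h2) (Nat.lt_succ_self _)
      have heq := congrFun hij (⟨c i j, hkN⟩ : Fin N)
      simp only at heq
      have hcd : c i j = hk.choose := by rw [hc]; simp only [dif_pos hk]
      rw [hcd] at heq
      exact hk.choose_spec heq
    set σ : (Fin N → ULift.{u} Bool) → ℕ := fun v =>
      if h : ∃ i ∈ I, (fun k : Fin N => e i k.val) = v then n h.choose else 0 with hσ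
    refine ⟨F ⟨N, σ⟩, hsub ?_, Set.mem_range_self _⟩
    intro i hi
    have hex : ∃ i' ∈ I, (fun k : Fin N => e i' k.val) = fun k : Fin N => e i k.val :=
      ⟨i, hi, rfl⟩
    have : σ (fun k : Fin N => e i k.val) = n i := by
      rw [hσ]
      simp only [dif_pos hex]
      congr 1
      exact hsep' _ hex.choose_spec.1 _ hi hex.choose_spec.2
    show d i (σ fun k => e i k.val) ∈ u i
    rw [this]
    exact hn i hi
  exact ⟨⟨Set.range F, Set.countable_range F, hdense⟩⟩

variable {G : Type u} [Group G] [TopologicalSpace G] [IsTopologicalGroup G]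

theorem omegaNarrow_balanced (hω : OmegaNarrow G) {U : Set G} (hU : U ∈ 𝓝 1) :
    ∃ V : ℕ → Set G, (∀ n, V n ∈ 𝓝 (1 : G)) ∧ ∀ x : G, ∃ n, ∀ v ∈ V n, x * v * x⁻¹ ∈ U := by
  obtain ⟨V₁, hV₁, _, hV₁sym, hV₁sq⟩ := exists_closed_nhds_one_inv_eq_mul_subset hU
  obtain ⟨W, hW, _, hWsym, hWsq⟩ := exists_closed_nhds_one_inv_eq_mul_subset hV₁
  have hWsub : W ⊆ V₁ := fun w hw => by
    simpa using hWsq (Set.mul_mem_mul hw (mem_of_mem_nhds hW))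
  have h3 : ∀ a ∈ W, ∀ b ∈ W, ∀ c ∈ W, a * b * c ∈ U := by
    intro a ha b hb c hc
    exact hV₁sq (Set.mul_mem_mul (hWsq (Set.mul_mem_mul ha hb)) (hWsub hc))
  obtain ⟨C, hCc, hCU⟩ := hω W hW
  have hCne : C.Nonempty := by
    rcases hCU (Set.mem_univ (1 : G)) with ⟨c, hc, w, _, _⟩
    exact ⟨c, hc⟩
  obtain ⟨c, rfl⟩ := hCc.exists_eq_range hCne
  refine ⟨fun n => (fun v => (c n)⁻¹ * v * c n) ⁻¹' W, ?_, ?_⟩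
  · intro n
    have hcont : Continuous fun v : G => (c n)⁻¹ * v * c n := by fun_prop
    have h1 : ((fun v : G => (c n)⁻¹ * v * c n) 1) = 1 := by group
    have := hcont.continuousAt (x := (1 : G))
    refine this.preimage_mem_nhds ?_
    simpa using hW
  · intro x
    rcases hCU (Set.mem_univ x⁻¹) with ⟨cn, ⟨n, rfl⟩, w, hw, hx⟩
    refine ⟨n, fun v hv => ?_⟩
    have hxw : x = w⁻¹ * (c n)⁻¹ := by
      have h : c n * w = x⁻¹ := hx
      rw [← mul_inv_rev, h, inv_inv]
    have : x * v * x⁻¹ = w⁻¹ * ((c n)⁻¹ * v * c n) * w := by rw [hxw]; group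
    rw [this]
    have hwinv : w⁻¹ ∈ W := by rw [← hWsym]; simpa using hw
    exact h3 _ hwinv _ hv _ hw

private noncomputable def guranSeq {α : Type u} (shr : Set α → Set α) (bal : Set α → ℕ → Set α)
    (U : Set α) : ℕ → Set α
  | 0 => shr U
  | n + 1 =>
      shr (guranSeq shr bal U n ∩ bal (guranSeq shr bal U (Nat.unpair n).1) (Nat.unpair n).2)
  decreasing_by
  · exact Nat.lt_succ_self n
  · exact Nat.lt_succ_of_le (Nat.unpair_left_le n)

theorem exists_guran (hω : OmegaNarrow G) {U : Set G} (hU : U ∈ 𝓝 1) :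
    ∃ V : ℕ → Set G,
      (∀ n, V n ∈ 𝓝 (1 : G)) ∧
      (∀ n, (V n)⁻¹ = V n) ∧
      V 0 ⊆ U ∧
      (∀ n, V (n + 1) * V (n + 1) ⊆ V n) ∧
      (∀ x : G, ∀ n, ∃ m, ∀ v ∈ V m, x * v * x⁻¹ ∈ V n) := by
  classical
  have hbal' : ∀ S : Set G, ∃ f : ℕ → Set G,
      (∀ k, f k ∈ 𝓝 (1 : G)) ∧ (S ∈ 𝓝 1 → ∀ x : G, ∃ k, ∀ v ∈ f k, x * v * x⁻¹ ∈ S) := by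
    intro S
    by_cases hS : S ∈ 𝓝 (1 : G)
    · obtain ⟨f, h1, h2⟩ := omegaNarrow_balanced hω hS
      exact ⟨f, h1, fun _ => h2⟩
    · exact ⟨fun _ => Set.univ, fun _ => Filter.univ_mem, fun h => absurd h hS⟩
  choose bal hbal1 hbal2 using hbal'
  have hshr' : ∀ S : Set G, ∃ T : Set G,
      S ∈ 𝓝 (1 : G) → T ∈ 𝓝 (1 : G) ∧ T⁻¹ = T ∧ T * T ⊆ S ∧ T ⊆ S := by
    intro S
    by_cases hS : S ∈ 𝓝 (1 : G)
    · obtain ⟨T, hT, _, hTsym, hTsq⟩ := exists_closed_nhds_one_inv_eq_mul_subset hS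
      exact ⟨T, fun _ => ⟨hT, hTsym, hTsq,
        fun t ht => by simpa using hTsq (Set.mul_mem_mul ht (mem_of_mem_nhds hT))⟩⟩
    · exact ⟨S, fun h => absurd h hS⟩
  choose shr hshr using hshr'
  set V : ℕ → Set G := guranSeq shr bal U with hV
  have hV0 : V 0 = shr U := by rw [hV, guranSeq]
  have hVsucc : ∀ n, V (n + 1) =
      shr (V n ∩ bal (V (Nat.unpair n).1) (Nat.unpair n).2) := by
    intro n; rw [hV]; rw [guranSeq]
  have hmem : ∀ n, V n ∈ 𝓝 (1 : G) := by
    intro n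
    induction n using Nat.strong_induction_on with
    | _ n ih =>
      match n with
      | 0 => rw [hV0]; exact (hshr U hU).1
      | n + 1 =>
        have h1 : V n ∈ 𝓝 (1 : G) := ih n (Nat.lt_succ_self n)
        have hS : V n ∩ bal (V (Nat.unpair n).1) (Nat.unpair n).2 ∈ 𝓝 (1 : G) :=
          Filter.inter_mem h1 (hbal1 _ _)
        rw [hVsucc]
        exact (hshr _ hS).1
  have hSmem : ∀ n, V n ∩ bal (V (Nat.unpair n).1) (Nat.unpair n).2 ∈ 𝓝 (1 : G) :=
    fun n => Filter.inter_mem (hmem n) (hbal1 _ _)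
  refine ⟨V, hmem, ?_, ?_, ?_, ?_⟩
  · intro n
    match n with
    | 0 => rw [hV0]; exact (hshr U hU).2.1
    | n + 1 => rw [hVsucc]; exact (hshr _ (hSmem n)).2.1
  · rw [hV0]; exact (hshr U hU).2.2.2
  · intro n
    rw [hVsucc]
    exact (hshr _ (hSmem n)).2.2.1.trans Set.inter_subset_left
  · intro x n
    obtain ⟨k, hk⟩ := hbal2 (V n) (hmem n) x
    refine ⟨Nat.pair n k + 1, fun v hv => ?_⟩
    rw [hVsucc, Nat.unpair_pair] at hv
    have hS : V (Nat.pair n k) ∩ bal (V n) k ∈ 𝓝 (1 : G) :=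
      Filter.inter_mem (hmem _) (hbal1 _ _)
    have hsub2 : shr (V (Nat.pair n k) ∩ bal (V n) k) ⊆ bal (V n) k :=
      (hshr _ hS).2.2.2.trans Set.inter_subset_right
    exact hk v (hsub2 hv)

theorem factor_sep {G : Type u} [Group G] (V : ℕ → Set G)
    (hVsym : ∀ n, (V n)⁻¹ = V n)
    (hVsq : ∀ n, V (n + 1) * V (n + 1) ⊆ V n)
    (hone : ∀ n, (1 : G) ∈ V n)
    (hVconj : ∀ x : G, ∀ n, ∃ m, ∀ v ∈ V m, x * v * x⁻¹ ∈ V n)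
    (hcov : ∀ n, ∃ C : Set G, C.Countable ∧ Set.univ ⊆ C * V n) :
    ∃ t : TopologicalSpace G, @IsTopologicalGroup G t _ ∧ @SeparableSpace G t ∧
      V 0 ∈ @nhds G t 1 ∧ ∀ s ∈ @nhds G t 1, ∃ n, V n ⊆ s := by
  classical
  have hVdec : ∀ n, V (n + 1) ⊆ V n := by
    intro n v hv
    simpa using hVsq n (Set.mul_mem_mul hv (hone (n + 1)))
  have hVanti : Antitone V := antitone_nat_of_succ_le hVdec
  let B : GroupFilterBasis G :=
    { sets := Set.range V
      nonempty := ⟨V 0, Set.mem_range_self 0⟩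
      inter_sets := by
        rintro _ _ ⟨a, rfl⟩ ⟨b, rfl⟩
        exact ⟨V (max a b), Set.mem_range_self _,
          Set.subset_inter (hVanti (le_max_left a b)) (hVanti (le_max_right a b))⟩
      one' := by
        rintro _ ⟨n, rfl⟩
        exact hone n
      mul' := by
        rintro _ ⟨n, rfl⟩
        exact ⟨V (n + 1), Set.mem_range_self _, hVsq n⟩
      inv' := by
        rintro _ ⟨n, rfl⟩
        refine ⟨V n, Set.mem_range_self _, fun v hv => ?_⟩
        show v⁻¹ ∈ V n
        rw [← hVsym n]
        simpa using hv
      conj' := by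
        intro x₀ _ h
        obtain ⟨n, rfl⟩ := h
        obtain ⟨m, hm⟩ := hVconj x₀ n
        exact ⟨V m, Set.mem_range_self _, fun v hv => hm v hv⟩ }
  letI t := B.topology
  haveI htg : @IsTopologicalGroup G t _ := B.isTopologicalGroup
  have hsep : @SeparableSpace G t := by
    choose C hCc hCU using hcov
    have hdense : Dense (⋃ n, C n) := by
      intro x
      rw [mem_closure_iff_nhds_basis (B.nhds_hasBasis x)]
      rintro _ ⟨n, rfl⟩
      rcases hCU n (Set.mem_univ x) with ⟨c, hc, v, hv, hcv⟩
      refine ⟨c, Set.mem_iUnion.2 ⟨n, hc⟩, v⁻¹, ?_, ?_⟩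
      · rw [← hVsym n]; simpa using hv
      · show x * v⁻¹ = c
        rw [← hcv]; group
    exact ⟨⟨⋃ n, C n, Set.countable_iUnion hCc, hdense⟩⟩
  refine ⟨t, htg, hsep, B.mem_nhds_one (Set.mem_range_self 0), ?_⟩
  intro s hs
  rw [(B.nhds_one_hasBasis).mem_iff] at hs
  obtain ⟨_, ⟨n, rfl⟩, hsub⟩ := hs
  exact ⟨n, hsub⟩

theorem exists_factor_topology {G : Type u} [Group G] [τ : TopologicalSpace G]
    [IsTopologicalGroup G] (hω : OmegaNarrow G) {U : Set G} (hU : U ∈ @nhds G τ 1) :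
    ∃ t : TopologicalSpace G,
      @IsTopologicalGroup G t _ ∧
      @SeparableSpace G t ∧
      (∃ W ∈ @nhds G t 1, W ⊆ U) ∧
      ∀ s ∈ @nhds G t 1, s ∈ @nhds G τ 1 := by
  obtain ⟨V, hVmem, hVsym, hV0U, hVsq, hVconj⟩ := exists_guran hω hU
  obtain ⟨t, htg, hsep, h0, hcoarse⟩ := factor_sep V hVsym hVsq
    (fun n => mem_of_mem_nhds (hVmem n)) hVconj (fun n => hω _ (hVmem n))
  refine ⟨t, htg, hsep, ⟨V 0, h0, hV0U⟩, fun s hs => ?_⟩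
  obtain ⟨n, hn⟩ := hcoarse s hs
  exact Filter.mem_of_superset (hVmem n) hn

theorem tweight_le_continuum_of_embedding {H : Type u} [Group H] [TopologicalSpace H]
    (e : SepGroupEmbedding H) : tweight H ≤ Cardinal.continuum := by
  classical
  letI := e.groupK
  letI := e.topK
  haveI := e.tgK
  haveI := e.sepK
  haveI : Nonempty e.K := ⟨e.f 1⟩
  obtain ⟨u, hu⟩ := TopologicalSpace.exists_dense_seq e.K
  have hbase : IsTopologicalBasis (Set.range fun S : Set ℕ => interior (closure (u '' S))) := by
    apply isTopologicalBasis_of_isOpen_of_nhds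
    · rintro _ ⟨S, rfl⟩; exact isOpen_interior
    · intro a O haO hO
      obtain ⟨Cl, hCl, hClosed, hClO⟩ := exists_mem_nhds_isClosed_subset (hO.mem_nhds haO)
      refine ⟨interior (closure (u '' (u ⁻¹' interior Cl))), ⟨_, rfl⟩, ?_, ?_⟩
      · have hsub : interior Cl ⊆ closure (u '' (u ⁻¹' interior Cl)) := by
          intro y hy
          rw [mem_closure_iff]
          intro o ho hyo
          obtain ⟨m, hm⟩ := hu.exists_mem_open (ho.inter isOpen_interior) ⟨y, hyo, hy⟩
          exact ⟨u m, hm.1, Set.mem_image_of_mem u hm.2⟩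
        have ha : a ∈ interior Cl := mem_interior_iff_mem_nhds.2 hCl
        exact interior_maximal hsub isOpen_interior ha
      · calc interior (closure (u '' (u ⁻¹' interior Cl)))
            ⊆ closure (u '' (u ⁻¹' interior Cl)) := interior_subset
          _ ⊆ closure Cl :=
            closure_mono ((Set.image_preimage_subset u _).trans interior_subset)
          _ ⊆ O := by rw [hClosed.closure_eq]; exact hClO
  have hbH : IsTopologicalBasis
      (Set.range ((Set.preimage e.f) ∘ fun S : Set ℕ => interior (closure (u '' S)))) := by
    rw [Set.range_comp]
    exact hbase.isInducing e.inducing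
  have hle : tweight H ≤
      #(Set.range ((Set.preimage e.f) ∘ fun S : Set ℕ => interior (closure (u '' S)))) :=
    csInf_le' ⟨_, hbH, rfl⟩
  refine hle.trans ?_
  have h2 := Cardinal.mk_range_le_lift
    (f := (Set.preimage e.f) ∘ fun S : Set ℕ => interior (closure (u '' S)))
  rw [Cardinal.lift_uzero] at h2
  refine h2.trans ?_
  rw [Cardinal.mk_set, Cardinal.mk_nat, Cardinal.two_power_aleph0, Cardinal.lift_continuum]

/-- An ω-narrow topological group `H` is topologically isomorphic to a subgroup of a
separable topological group if and only if `H` is ω-narrow and `w(H) ≤ 𝔠`. -/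
theorem subgroup_of_separable_iff (H : Type u) [Group H] [TopologicalSpace H]
    [IsTopologicalGroup H] (hH : OmegaNarrow H) :
    Nonempty (SepGroupEmbedding H) ↔
      OmegaNarrow H ∧ tweight H ≤ Cardinal.continuum := by
  classical
  constructor
  · rintro ⟨e⟩
    exact ⟨hH, tweight_le_continuum_of_embedding e⟩
  · rintro ⟨-, hw⟩
    have hne : {c : Cardinal.{u} | ∃ B : Set (Set H), IsTopologicalBasis B ∧ #B = c}.Nonempty :=
      ⟨#({S : Set H | IsOpen S}), {S : Set H | IsOpen S}, isTopologicalBasis_opens, rfl⟩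
    obtain ⟨B, hB, hBc⟩ := csInf_mem hne
    have hBcard : #B ≤ Cardinal.continuum := by rw [hBc]; exact hw
    set I : Set (Set H) := {S | S ∈ B ∧ (1 : H) ∈ S} with hIdef
    have hIc : #I ≤ Cardinal.continuum :=
      (Cardinal.mk_le_mk_of_subset fun S hS => hS.1).trans hBcard
    have hmem : ∀ i : I, (i : Set H) ∈ 𝓝 (1 : H) := fun i => (hB.isOpen i.2.1).mem_nhds i.2.2
    have hfac := fun i : I => exists_factor_topology hH (hmem i)
    choose t ht1 ht2 ht3 ht4 using hfac
    letI piT : TopologicalSpace (↥I → H) := @Pi.topologicalSpace ↥I (fun _ => H) t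
    haveI piG : @IsTopologicalGroup (↥I → H) piT _ := @Pi.topologicalGroup ↥I (fun _ => H) t (fun _ => inferInstance) ht1
    haveI piSep : @SeparableSpace (↥I → H) piT := @hmp_separable ↥I (fun _ => H) t ht2 hIc
    obtain ⟨v₀, hv₀B, h1v₀, -⟩ := hB.exists_subset_of_mem_open (Set.mem_univ (1 : H)) isOpen_univ
    have i₀ : ↥I := ⟨v₀, hv₀B, h1v₀⟩
    let φ : H →* (↥I → H) := { toFun := fun x _ => x, map_one' := rfl, map_mul' := fun _ _ => rfl }
    have tg' : @IsTopologicalGroup H (TopologicalSpace.induced φ piT) _ := topologicalGroup_induced φ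
    have hnhds : (𝓝 (1 : H)) = @nhds H (TopologicalSpace.induced φ piT) 1 := by
      rw [@nhds_induced (↥I → H) H piT φ 1]
      have h1 : @nhds (↥I → H) piT (φ 1) = Filter.pi fun i : ↥I => @nhds H (t i) 1 := by
        show @nhds (↥I → H) (@Pi.topologicalSpace ↥I (fun _ => H) t) (φ 1) = _
        rw [@nhds_pi ↥I (fun _ => H) t (φ 1)]
        rfl
      rw [h1]
      show 𝓝 (1 : H) = Filter.comap φ (⨅ i : ↥I, Filter.comap (Function.eval i) (@nhds H (t i) 1))
      rw [Filter.comap_iInf]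
      have hcomp : ∀ i : ↥I,
          Filter.comap φ (Filter.comap (Function.eval i) (@nhds H (t i) 1)) = @nhds H (t i) 1 := by
        intro i
        rw [Filter.comap_comap]
        have heq : (Function.eval i ∘ φ) = id := rfl
        rw [heq, Filter.comap_id]
      rw [iInf_congr hcomp]
      apply le_antisymm
      · exact le_iInf fun i => Filter.le_def.2 fun s hs => ht4 i s hs
      · refine Filter.le_def.2 fun s hs => ?_
        obtain ⟨v, hvB, h1v, hvs⟩ := hB.mem_nhds_iff.1 hs
        have hi : v ∈ I := ⟨hvB, h1v⟩
        obtain ⟨W, hW, hWv⟩ := ht3 ⟨v, hi⟩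
        exact Filter.mem_iInf_of_mem ⟨v, hi⟩ (Filter.mem_of_superset hW (hWv.trans hvs))
    exact ⟨{ K := ↥I → H
             groupK := inferInstance
             topK := piT
             tgK := piG
             sepK := piSep
             f := φ
             inj := fun a b h => congrFun h i₀
             inducing := ⟨IsTopologicalGroup.ext ‹IsTopologicalGroup H› tg' hnhds⟩ }⟩
end
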